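/- arXiv:1704.04819 — 5 statements merged into one kernel-verified Lean document; each statement's English description precedes it below -/
import Mathlib

section
/- There exists a universal constant C>0 with the following property. Let 0<β≤1, N∈ℕ with N≥1, and M,B≥0. Let φ:ℝ³→ℝ satisfy |φ(k)| ≤ M for all k ∈ ℝ³ and ∑_{r∈2πℤ³} φ(r/N^β)² ≤ B²·N^{3β}. Then for every q ∈ 2πℤ³, (1/N)·∑_{r∈2πℤ³, r≠−q} |φ(r/N^β)|/|q+r|² ≤ C·(M+B)·N^{β−1}, and in particular this sum converges. -/
open MeasureTheory Real Filter

noncomputable section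

/-- `ℝ³` as a Euclidean space. -/
abbrev E3 : Type := EuclideanSpace ℝ (Fin 3)

/-- The point `2πn` of the lattice `Λ* = 2πℤ³ ⊂ ℝ³`. -/
def latticePt (n : Fin 3 → ℤ) : E3 := WithLp.toLp 2 (fun i => 2 * π * (n i : ℝ))

namespace S8



abbrev I3 := Fin 3 → ℤ

def nn (m : I3) : ℕ := Finset.univ.sup fun i => (m i).natAbs

def box (J : ℕ) : Finset I3 := Fintype.piFinset fun _ => Finset.Icc (-(J:ℤ)) J

lemma mem_box {m : I3} {J : ℕ} : m ∈ box J ↔ nn m ≤ J := by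
  simp only [box, Fintype.mem_piFinset, Finset.mem_Icc, nn, Finset.sup_le_iff, Finset.mem_univ,
    forall_true_left]
  exact (forall_congr' fun i => by omega).symm

lemma box_mono {J : ℕ} : box J ⊆ box (J+1) :=
  fun m hm => mem_box.2 ((mem_box.1 hm).trans (Nat.le_succ J))

lemma card_box (J : ℕ) : (box J).card = (2*J+1)^3 := by
  rw [box, Fintype.card_piFinset]
  have h : (Finset.Icc (-(J:ℤ)) J).card = 2*J+1 := by
    rw [Int.card_Icc]; omega
  simp [h]

def shell : ℕ → Finset I3
  | 0 => box 0
  | (j+1) => box (j+1) \ box j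

lemma mem_shell {m : I3} {j : ℕ} : m ∈ shell j ↔ nn m = j := by
  cases j with
  | zero => simp [shell, mem_box, Nat.le_zero]
  | succ j => simp only [shell, Finset.mem_sdiff, mem_box]; omega

lemma card_shell_le {j : ℕ} (hj : 1 ≤ j) : (shell j).card ≤ 27 * j^2 := by
  obtain ⟨i, rfl⟩ : ∃ i, j = i + 1 := ⟨j - 1, by omega⟩
  rw [shell, Finset.card_sdiff_of_subset box_mono, card_box, card_box]
  have h1 : (2*(i+1)+1)^3 ≤ 27*(i+1)^2 + (2*i+1)^3 := by nlinarith [sq_nonneg i]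
  omega

lemma sum_box (H : I3 → ℝ) (J : ℕ) :
    ∑ m ∈ box J, H m = ∑ j ∈ Finset.range (J+1), ∑ m ∈ shell j, H m := by
  induction J with
  | zero => simp [shell]
  | succ J ih =>
      rw [Finset.sum_range_succ, ← ih, shell, ← Finset.sum_sdiff box_mono]
      ring

lemma lemmaL {h : ℕ → ℝ} (h0 : h 0 = 0) (hpos : ∀ j, 0 ≤ h j)
    (hs : Summable fun j : ℕ => (j:ℝ)^2 * h j) :
    Summable (fun m : I3 => h (nn m)) ∧
      ∑' m : I3, h (nn m) ≤ 27 * ∑' j : ℕ, (j:ℝ)^2 * h j := by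
  have key : ∀ u : Finset I3, ∑ m ∈ u, h (nn m) ≤ 27 * ∑' j : ℕ, (j:ℝ)^2 * h j := by
    intro u
    set J := u.sup nn with hJ
    have hu : u ⊆ box J := fun m hm => mem_box.2 (Finset.le_sup (f := nn) hm)
    calc ∑ m ∈ u, h (nn m) ≤ ∑ m ∈ box J, h (nn m) :=
          Finset.sum_le_sum_of_subset_of_nonneg hu (fun m _ _ => hpos _)
      _ = ∑ j ∈ Finset.range (J+1), ∑ m ∈ shell j, h (nn m) := sum_box _ _
      _ ≤ ∑ j ∈ Finset.range (J+1), 27 * ((j:ℝ)^2 * h j) := by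
          refine Finset.sum_le_sum fun j _ => ?_
          have hsum : ∑ m ∈ shell j, h (nn m) = ((shell j).card : ℝ) * h j := by
            rw [Finset.sum_congr rfl (fun m hm => by rw [mem_shell.1 hm]),
              Finset.sum_const, nsmul_eq_mul]
          rw [hsum]
          rcases Nat.eq_zero_or_pos j with rfl | hj
          · simp [h0]
          · have hc : ((shell j).card : ℝ) ≤ 27 * (j:ℝ)^2 := by
              exact_mod_cast Nat.cast_le.2 (card_shell_le hj) |>.trans (by push_cast; ring_nf; rfl)
            calc ((shell j).card : ℝ) * h j ≤ (27 * (j:ℝ)^2) * h j :=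
                  mul_le_mul_of_nonneg_right hc (hpos j)
              _ = 27 * ((j:ℝ)^2 * h j) := by ring
      _ = 27 * ∑ j ∈ Finset.range (J+1), (j:ℝ)^2 * h j := by rw [Finset.mul_sum]
      _ ≤ 27 * ∑' j : ℕ, (j:ℝ)^2 * h j := by
          refine mul_le_mul_of_nonneg_left ?_ (by norm_num)
          exact Summable.sum_le_tsum _ (fun i _ => mul_nonneg (sq_nonneg _) (hpos i)) hs
  have hsum : Summable (fun m : I3 => h (nn m)) :=
    summable_of_sum_le (fun m => hpos _) key
  exact ⟨hsum, Summable.tsum_le_of_sum_le hsum key⟩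

lemma one_le_nn {m : I3} (hm : m ≠ 0) : 1 ≤ nn m := by
  by_contra h
  push_neg at h
  apply hm
  funext i
  have hle : (m i).natAbs ≤ nn m := Finset.le_sup (f := fun i => (m i).natAbs) (Finset.mem_univ i)
  have h0 : (m i).natAbs = 0 := by omega
  have : m i = 0 := by omega
  simpa using this

lemma norm_sq_ge (q r : Fin 3 → ℤ) :
    ((nn (q + r) : ℝ))^2 ≤ ‖latticePt q + latticePt r‖^2 := by
  obtain ⟨i₀, -, hi₀⟩ := Finset.exists_mem_eq_sup Finset.univ Finset.univ_nonempty
    (fun i => ((q + r) i).natAbs)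
  have hnorm : ‖latticePt q + latticePt r‖^2 = ∑ i, (2*π*((q i : ℝ)) + 2*π*((r i : ℝ)))^2 := by
    rw [EuclideanSpace.norm_eq, Real.sq_sqrt (by positivity)]
    refine Finset.sum_congr rfl fun i _ => ?_
    have : (latticePt q + latticePt r) i = 2*π*((q i : ℝ)) + 2*π*((r i : ℝ)) := by simp [latticePt]
    rw [this, Real.norm_eq_abs, sq_abs]
  rw [hnorm]
  have hterm : (2*π*((q i₀ : ℝ)) + 2*π*((r i₀ : ℝ)))^2 ≤
      ∑ i, (2*π*((q i : ℝ)) + 2*π*((r i : ℝ)))^2 :=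
    Finset.single_le_sum (f := fun i => (2*π*((q i : ℝ)) + 2*π*((r i : ℝ)))^2)
      (fun i _ => sq_nonneg _) (Finset.mem_univ i₀)
  refine le_trans ?_ hterm
  have hx : ((nn (q + r) : ℝ)) = |((q i₀ + r i₀ : ℤ) : ℝ)| := by
    have h1 : nn (q + r) = ((q + r) i₀).natAbs := hi₀
    rw [h1]
    have : (q + r) i₀ = q i₀ + r i₀ := rfl
    rw [this, Nat.cast_natAbs, Int.cast_abs]
  rw [hx, sq_abs]
  have hpi : (3:ℝ) < π := Real.pi_gt_three
  have hcast : (2*π*((q i₀ : ℝ)) + 2*π*((r i₀ : ℝ))) = 2*π*((q i₀ + r i₀ : ℤ) : ℝ) := by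
    push_cast; ring
  rw [hcast]
  have hpi2 : 1 ≤ (2*π)^2 := by nlinarith
  calc ((q i₀ + r i₀ : ℤ) : ℝ)^2 = 1 * ((q i₀ + r i₀ : ℤ) : ℝ)^2 := by ring
    _ ≤ (2*π)^2 * ((q i₀ + r i₀ : ℤ) : ℝ)^2 :=
        mul_le_mul_of_nonneg_right hpi2 (sq_nonneg _)
    _ = (2*π*((q i₀ + r i₀ : ℤ) : ℝ))^2 := by ring

lemma amgm {x t s : ℝ} (hx : 0 ≤ x) (ht : 0 < t) (hs : 0 < s) :
    x / t ≤ s/2 * x^2 + 1/(2*s*t^2) := by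
  rw [div_le_iff₀ ht]
  have e1 : (s/2*x^2 + 1/(2*s*t^2)) * t = s/2*x^2*t + 1/(2*s*t) := by
    field_simp
  rw [e1, ← sub_nonneg]
  have e2 : s/2*x^2*t + 1/(2*s*t) - x = (s*x*t - 1)^2 / (2*s*t) := by
    field_simp; ring
  rw [e2]; positivity


lemma tail_sq {K : ℕ} (hK : 1 ≤ K) :
    Summable (fun j : ℕ => if K < j then (1:ℝ)/(j:ℝ)^2 else 0) ∧
    ∑' j : ℕ, (if K < j then (1:ℝ)/(j:ℝ)^2 else 0) ≤ 1/K := by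
  have hKpos : (0:ℝ) < K := by exact_mod_cast hK
  set g : ℕ → ℝ := fun i => 1/((K:ℝ)+i) - 1/((K:ℝ)+i+1) with hg
  have hg0 : ∀ i, 0 ≤ g i := by
    intro i
    have h1 : (0:ℝ) < (K:ℝ) + i := by positivity
    have := one_div_le_one_div_of_le h1 (by linarith : (K:ℝ)+i ≤ (K:ℝ)+i+1)
    simp only [hg]; linarith
  have hgs : HasSum g (1/K) := by
    rw [hasSum_iff_tendsto_nat_of_nonneg hg0]
    have hps : ∀ n, ∑ i ∈ Finset.range n, g i = 1/(K:ℝ) - 1/((K:ℝ)+n) := by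
      intro n
      have := Finset.sum_range_sub' (fun i : ℕ => 1/((K:ℝ)+i)) n
      simpa [hg, ← add_assoc] using this
    simp only [hps]
    have h2 : Tendsto (fun n : ℕ => 1/((K:ℝ)+n)) atTop (nhds 0) := by
      have h3 := (tendsto_add_atTop_iff_nat K).2 (tendsto_one_div_atTop_nhds_zero_nat (𝕜 := ℝ))
      have h4 : (fun n : ℕ => 1/((n + K : ℕ):ℝ)) = fun n : ℕ => 1/((K:ℝ)+n) := by
        funext n; push_cast; rw [add_comm]
      rwa [h4] at h3
    simpa using tendsto_const_nhds.sub h2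
  set F : ℕ → ℝ := fun j => if K < j then (1:ℝ)/(j:ℝ)^2 else 0 with hF
  have hinj : Function.Injective (fun i : ℕ => K + 1 + i) := fun a b h => by
    dsimp at h; omega
  have hsupp : Function.support F ⊆ Set.range (fun i : ℕ => K + 1 + i) := by
    intro j hj
    have hKj : K < j := by
      by_contra h
      exact hj (by simp [hF, if_neg h])
    exact ⟨j - (K+1), by dsimp; omega⟩
  have hFval : ∀ i : ℕ, F (K + 1 + i) = 1/(((K:ℝ)+i+1))^2 := by
    intro i
    have hcond : K < K + 1 + i := by omega
    have hcast : ((K + 1 + i : ℕ) : ℝ) = (K:ℝ) + i + 1 := by push_cast; ring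
    simp only [hF, if_pos hcond, hcast]
  have hFe : ∀ i : ℕ, F (K + 1 + i) ≤ g i := by
    intro i
    have h1 : (0:ℝ) < (K:ℝ) + i := by positivity
    have hgi : g i = 1/(((K:ℝ)+i)*((K:ℝ)+i+1)) := by
      simp only [hg]; field_simp; ring
    rw [hFval i, hgi]
    apply one_div_le_one_div_of_le (by positivity)
    nlinarith
  have hFe0 : ∀ i : ℕ, 0 ≤ F (K + 1 + i) := fun i => by
    rw [hFval i]; positivity
  have hsF : Summable (fun i : ℕ => F (K + 1 + i)) :=
    Summable.of_nonneg_of_le hFe0 hFe hgs.summable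
  have hSummF : Summable F := (Function.Injective.summable_iff hinj
    (fun j hj => by by_contra h; exact hj (hsupp h))).1 hsF
  constructor
  · exact hSummF
  · have heq := hinj.tsum_eq (f := F) hsupp
    rw [← heq]
    calc ∑' i : ℕ, F (K + 1 + i) ≤ ∑' i : ℕ, g i :=
          Summable.tsum_le_tsum hFe hsF hgs.summable
      _ = 1/K := hgs.tsum_eq


lemma h_bound {K : ℕ} (hK : 1 ≤ K) {M s : ℝ} (hM : 0 ≤ M) (hs : 0 < s) :
    Summable (fun j : ℕ => (j:ℝ)^2 *
      (if j = 0 then 0 else if j ≤ K then M / (j:ℝ)^2 else 1/(2*s*(j:ℝ)^4))) ∧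
    ∑' j : ℕ, (j:ℝ)^2 *
        (if j = 0 then 0 else if j ≤ K then M / (j:ℝ)^2 else 1/(2*s*(j:ℝ)^4)) ≤
      K * M + 1/(2*s) * (1/K) := by
  set A : ℕ → ℝ := fun j => if j ≠ 0 ∧ j ≤ K then M else 0 with hA
  set Bf : ℕ → ℝ := fun j => (1/(2*s)) * (if K < j then 1/(j:ℝ)^2 else 0) with hBf
  have heq : (fun j : ℕ => (j:ℝ)^2 *
      (if j = 0 then 0 else if j ≤ K then M / (j:ℝ)^2 else 1/(2*s*(j:ℝ)^4))) =
      fun j => A j + Bf j := by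
    funext j
    rcases eq_or_ne j 0 with rfl | hj0
    · simp [hA, hBf, Nat.not_lt_zero]
    · rcases le_or_gt j K with hjK | hjK
      · have hj2 : ((j:ℝ))^2 ≠ 0 := by
          have : (0:ℝ) < (j:ℝ) := by exact_mod_cast Nat.pos_of_ne_zero hj0
          positivity
        simp only [hA, hBf, if_neg hj0, if_pos hjK, if_neg (not_lt.2 hjK),
          if_pos (And.intro hj0 hjK)]
        field_simp
        ring
      · have hj2 : ((j:ℝ)) ≠ 0 := by
          have : (0:ℝ) < (j:ℝ) := by exact_mod_cast Nat.pos_of_ne_zero hj0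
          positivity
        have hsne : s ≠ 0 := ne_of_gt hs
        simp only [hA, hBf, if_neg hj0, if_neg (not_le.2 hjK), if_pos hjK,
          if_neg (by omega : ¬(j ≠ 0 ∧ j ≤ K))]
        field_simp
        ring
  have hz : ∀ j ∉ Finset.Icc 1 K, A j = 0 := by
    intro j hj
    simp only [Finset.mem_Icc, not_and_or, not_le] at hj
    simp only [hA]
    rw [if_neg]
    rintro ⟨h1, h2⟩
    rcases hj with hj | hj
    · exact h1 (by omega)
    · omega
  have hAsum : Summable A := summable_of_ne_finset_zero hz
  have hAtsum : ∑' j, A j = K * M := by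
    rw [tsum_eq_sum hz]
    have hv : ∀ j ∈ Finset.Icc 1 K, A j = M := by
      intro j hj
      simp only [Finset.mem_Icc] at hj
      simp only [hA]
      rw [if_pos ⟨by omega, hj.2⟩]
    rw [Finset.sum_congr rfl hv, Finset.sum_const, Nat.card_Icc, nsmul_eq_mul]
    norm_num
  obtain ⟨htailS, htailB⟩ := tail_sq hK
  have hBsum : Summable Bf := htailS.mul_left _
  have hBtsum : ∑' j, Bf j ≤ 1/(2*s) * (1/K) := by
    rw [hBf, tsum_mul_left]
    exact mul_le_mul_of_nonneg_left htailB (by positivity)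
  rw [heq]
  refine ⟨hAsum.add hBsum, ?_⟩
  rw [Summable.tsum_add hAsum hBsum, hAtsum]
  linarith


end S8

open S8

/-- there is a universal `C > 0` such that whenever `|φ| ≤ M` and
`∑_{r∈2πℤ³} φ(r/N^β)² ≤ B²N^{3β}`, then for every `q ∈ 2πℤ³` the sum
`(1/N)·∑_{r≠−q} |φ(r/N^β)|/|q+r|²` converges and is `≤ C(M+B)N^{β−1}`. -/
theorem statement_8 :
    ∃ C > 0, ∀ (β : ℝ) (N : ℕ) (M B : ℝ) (φ : E3 → ℝ),
      0 < β → β ≤ 1 → 1 ≤ N → 0 ≤ M → 0 ≤ B →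
      (∀ k : E3, |φ k| ≤ M) →
      Summable (fun r : Fin 3 → ℤ => φ (((N : ℝ) ^ β)⁻¹ • latticePt r) ^ 2) →
      (∑' r : Fin 3 → ℤ, φ (((N : ℝ) ^ β)⁻¹ • latticePt r) ^ 2) ≤ B ^ 2 * (N : ℝ) ^ (3 * β) →
      ∀ q : Fin 3 → ℤ,
        Summable (fun r : {r : Fin 3 → ℤ // r ≠ -q} =>
          |φ (((N : ℝ) ^ β)⁻¹ • latticePt r.1)| / ‖latticePt q + latticePt r.1‖ ^ 2) ∧
        (1 / N : ℝ) * (∑' r : {r : Fin 3 → ℤ // r ≠ -q},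
            |φ (((N : ℝ) ^ β)⁻¹ • latticePt r.1)| / ‖latticePt q + latticePt r.1‖ ^ 2)
          ≤ C * (M + B) * (N : ℝ) ^ (β - 1) := by
  refine ⟨100, by norm_num, ?_⟩
  intro β N M B φ hβ hβ1 hN hM hB hφM hsum hsum_le q
  have hN1 : (1:ℝ) ≤ (N:ℝ) := by exact_mod_cast hN
  have hNpos : (0:ℝ) < N := by linarith
  set ν : ℝ := (N:ℝ)^β with hν
  have hν1 : 1 ≤ ν := Real.one_le_rpow hN1 (le_of_lt hβ)
  have hνpos : 0 < ν := by linarith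
  by_cases hMB : M + B = 0
  · -- trivial case
    have hM0 : M = 0 := by linarith
    have hzero : ∀ r : {r : I3 // r ≠ -q},
        |φ (((N : ℝ) ^ β)⁻¹ • latticePt r.1)| / ‖latticePt q + latticePt r.1‖ ^ 2 = 0 := by
      intro r
      have h1 := hφM (((N : ℝ) ^ β)⁻¹ • latticePt r.1)
      have h2 : |φ (((N : ℝ) ^ β)⁻¹ • latticePt r.1)| = 0 :=
        le_antisymm (by linarith) (abs_nonneg _)
      rw [h2, zero_div]
    constructor
    · exact summable_zero.congr fun r => (hzero r).symm
    · rw [tsum_congr hzero, tsum_zero, mul_zero, hM0]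
      have : B = 0 := by linarith
      rw [this]
      norm_num
  · -- main case
    have hP : 0 < M + B := lt_of_le_of_ne (by linarith) (Ne.symm hMB)
    set K : ℕ := ⌈ν⌉₊ with hKdef
    have hK1 : 1 ≤ K := Nat.one_le_ceil_iff.2 hνpos
    have hKν : ν ≤ (K:ℝ) := Nat.le_ceil ν
    have hK2ν : (K:ℝ) ≤ 2*ν := by
      have := Nat.ceil_lt_add_one (le_of_lt hνpos)
      have h2 : (K:ℝ) < ν + 1 := by exact_mod_cast this
      linarith
    have hKpos : (0:ℝ) < K := by linarith
    set s : ℝ := ((N:ℝ)^(2*β) * (M+B))⁻¹ with hsdef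
    have hN2βpos : (0:ℝ) < (N:ℝ)^(2*β) := rpow_pos_of_pos hNpos _
    have hs : 0 < s := by rw [hsdef]; positivity
    -- the comparison function
    set h : ℕ → ℝ := fun j =>
      if j = 0 then 0 else if j ≤ K then M / (j:ℝ)^2 else 1/(2*s*(j:ℝ)^4) with hh
    have h0 : h 0 = 0 := by simp [hh]
    have hpos : ∀ j, 0 ≤ h j := by
      intro j
      rw [hh]
      dsimp only
      split_ifs
      · exact le_rfl
      · positivity
      · positivity
    obtain ⟨hhs, hhb⟩ := h_bound hK1 hM hs
    obtain ⟨HLs, HLb⟩ := lemmaL h0 hpos hhs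
    -- shifted comparison function
    have hshift : Summable (fun r : I3 => h (nn (q + r))) :=
      ((Equiv.addLeft q).summable_iff (f := fun m => h (nn m))).2 HLs
    have hshift_tsum : ∑' r : I3, h (nn (q + r)) = ∑' m : I3, h (nn m) :=
      (Equiv.addLeft q).tsum_eq (fun m => h (nn m))
    -- the |φ|² part
    have hasum : Summable (fun r : I3 => |φ (((N : ℝ) ^ β)⁻¹ • latticePt r)|^2) :=
      hsum.congr fun r => (sq_abs _).symm
    have hasum_le : ∑' r : I3, |φ (((N : ℝ) ^ β)⁻¹ • latticePt r)|^2 ≤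
        B^2 * (N:ℝ)^(3*β) := by
      rw [tsum_congr (fun r => sq_abs (φ (((N : ℝ) ^ β)⁻¹ • latticePt r)))]
      exact hsum_le
    set G : I3 → ℝ := fun r =>
      s/2 * |φ (((N : ℝ) ^ β)⁻¹ • latticePt r)|^2 + h (nn (q + r)) with hG
    have hGsum : Summable G := (hasum.mul_left (s/2)).add hshift
    have hG0 : ∀ r, 0 ≤ G r := by
      intro r
      apply add_nonneg
      · positivity
      · exact hpos _
    have hGtsum : ∑' r : I3, G r ≤
        s/2 * (B^2 * (N:ℝ)^(3*β)) + 27 * ((K:ℝ) * M + 1/(2*s) * (1/(K:ℝ))) := by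
      rw [hG, Summable.tsum_add (hasum.mul_left (s/2)) hshift, tsum_mul_left, hshift_tsum]
      have h1 : s/2 * ∑' r : I3, |φ (((N : ℝ) ^ β)⁻¹ • latticePt r)|^2 ≤
          s/2 * (B^2 * (N:ℝ)^(3*β)) :=
        mul_le_mul_of_nonneg_left hasum_le (by positivity)
      have h2 : ∑' m : I3, h (nn m) ≤ 27 * ((K:ℝ) * M + 1/(2*s) * (1/(K:ℝ))) :=
        HLb.trans (mul_le_mul_of_nonneg_left hhb (by norm_num))
      linarith
    -- pointwise comparison
    have key : ∀ r : {r : I3 // r ≠ -q},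
        |φ (((N : ℝ) ^ β)⁻¹ • latticePt r.1)| / ‖latticePt q + latticePt r.1‖ ^ 2 ≤ G r.1 := by
      intro ⟨r, hr⟩
      dsimp only
      set x : ℝ := |φ (((N : ℝ) ^ β)⁻¹ • latticePt r)| with hx
      have hx0 : 0 ≤ x := abs_nonneg _
      have hxM : x ≤ M := hφM _
      have hm : q + r ≠ 0 := by
        intro hc
        exact hr (by rw [eq_neg_of_add_eq_zero_right hc])
      have hj1 : 1 ≤ nn (q + r) := one_le_nn hm
      have hj1' : (1:ℝ) ≤ ((nn (q+r) : ℝ)) := by exact_mod_cast hj1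
      have hjpos : (0:ℝ) < ((nn (q+r) : ℝ))^2 := by positivity
      have hD := norm_sq_ge q r
      have hDpos : 0 < ‖latticePt q + latticePt r‖ ^ 2 := lt_of_lt_of_le hjpos hD
      rcases le_or_gt (nn (q+r)) K with hcase | hcase
      · -- near region
        have hval : h (nn (q+r)) = M / ((nn (q+r):ℝ))^2 := by
          rw [hh]; dsimp only
          rw [if_neg (by omega), if_pos hcase]
        have : x / ‖latticePt q + latticePt r‖ ^ 2 ≤ M / ((nn (q+r):ℝ))^2 :=
          div_le_div₀ hM hxM hjpos hD
        rw [hG]; dsimp only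
        rw [hval]
        have hnn : 0 ≤ s/2 * x^2 := by positivity
        linarith
      · -- far region
        have hval : h (nn (q+r)) = 1/(2*s*((nn (q+r):ℝ))^4) := by
          rw [hh]; dsimp only
          rw [if_neg (by omega), if_neg (by omega)]
        calc x / ‖latticePt q + latticePt r‖ ^ 2 ≤ x / ((nn (q+r):ℝ))^2 :=
              div_le_div_of_nonneg_left hx0 hjpos hD
          _ ≤ s/2 * x^2 + 1/(2*s*(((nn (q+r):ℝ))^2)^2) := amgm hx0 hjpos hs
          _ = s/2 * x^2 + h (nn (q+r)) := by rw [hval]; ring_nf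
          _ = G r := by rw [hG]
    -- assemble
    have hf0 : ∀ r : {r : I3 // r ≠ -q},
        0 ≤ |φ (((N : ℝ) ^ β)⁻¹ • latticePt r.1)| / ‖latticePt q + latticePt r.1‖ ^ 2 :=
      fun r => div_nonneg (abs_nonneg _) (sq_nonneg _)
    have hGsub : Summable (fun r : {r : I3 // r ≠ -q} => G r.1) :=
      hGsum.subtype _
    have hfs : Summable (fun r : {r : I3 // r ≠ -q} =>
        |φ (((N : ℝ) ^ β)⁻¹ • latticePt r.1)| / ‖latticePt q + latticePt r.1‖ ^ 2) :=
      Summable.of_nonneg_of_le hf0 key hGsub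
    refine ⟨hfs, ?_⟩
    have hT1 : (∑' r : {r : I3 // r ≠ -q},
        |φ (((N : ℝ) ^ β)⁻¹ • latticePt r.1)| / ‖latticePt q + latticePt r.1‖ ^ 2) ≤
        ∑' r : {r : I3 // r ≠ -q}, G r.1 :=
      Summable.tsum_le_tsum key hfs hGsub
    have hT2 : (∑' r : {r : I3 // r ≠ -q}, G r.1) ≤ ∑' r : I3, G r :=
      Summable.tsum_subtype_le G {r : I3 | r ≠ -q} hG0 hGsum
    -- arithmetic
    have e3 : (N:ℝ)^(3*β) = (N:ℝ)^(2*β) * ν := by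
      rw [hν, ← rpow_add hNpos]; ring_nf
    have e2 : (N:ℝ)^(2*β) = ν * ν := by
      rw [hν, ← rpow_add hNpos]; ring_nf
    have hsinv : 1/(2*s) = (N:ℝ)^(2*β) * (M+B) / 2 := by
      rw [hsdef]
      field_simp
    have harith : s/2 * (B^2 * (N:ℝ)^(3*β)) + 27 * ((K:ℝ) * M + 1/(2*s) * (1/(K:ℝ))) ≤
        100 * (M+B) * ν := by
      have t1 : s/2 * (B^2 * (N:ℝ)^(3*β)) ≤ B * ν / 2 := by
        rw [hsdef, e3]
        have hne1 : (N:ℝ)^(2*β) ≠ 0 := ne_of_gt hN2βpos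
        have hne2 : (M+B) ≠ 0 := ne_of_gt hP
        have heq : ((N:ℝ)^(2*β) * (M+B))⁻¹ / 2 * (B^2 * ((N:ℝ)^(2*β) * ν)) =
            (B^2/(M+B)) * ν / 2 := by
          field_simp
        rw [heq]
        have hB2 : B^2/(M+B) ≤ B := by
          rw [div_le_iff₀ hP]
          linarith [mul_nonneg hB hM]
        linarith [mul_le_mul_of_nonneg_right hB2 (le_of_lt hνpos)]
      have t2 : 27 * ((K:ℝ) * M) ≤ 54 * M * ν := by
        linarith [mul_le_mul_of_nonneg_right hK2ν hM]
      have t3 : 27 * (1/(2*s) * (1/(K:ℝ))) ≤ 27/2 * (M+B) * ν := by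
        rw [hsinv, e2]
        have hKinv : 1/(K:ℝ) ≤ 1/ν := one_div_le_one_div_of_le hνpos hKν
        have hc : 0 ≤ ν * ν * (M+B) / 2 := by positivity
        have hle : ν * ν * (M+B) / 2 * (1/(K:ℝ)) ≤ ν * (M+B) / 2 := by
          calc ν * ν * (M+B) / 2 * (1/(K:ℝ)) ≤ ν * ν * (M+B) / 2 * (1/ν) :=
                mul_le_mul_of_nonneg_left hKinv hc
            _ = ν * (M+B) / 2 := by field_simp
        linarith [hle]
      linarith [t1, t2, t3, mul_nonneg hM (le_of_lt hνpos), mul_nonneg hB (le_of_lt hνpos)]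
    have e4 : (N:ℝ)^(β-1) = ν * (N:ℝ)⁻¹ := by
      rw [hν, rpow_sub hNpos, rpow_one, div_eq_mul_inv]
    have hfinal : (∑' r : {r : I3 // r ≠ -q},
        |φ (((N : ℝ) ^ β)⁻¹ • latticePt r.1)| / ‖latticePt q + latticePt r.1‖ ^ 2) ≤
        100 * (M+B) * ν := by
      linarith [hT1, hT2, hGtsum, harith]
    have hNinv : (0:ℝ) ≤ 1/(N:ℝ) := by positivity
    have hstep := mul_le_mul_of_nonneg_left hfinal hNinv
    have hrhs : (1/(N:ℝ)) * (100 * (M+B) * ν) = 100 * (M + B) * (N:ℝ)^(β-1) := by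
      rw [e4]; ring
    linarith [hstep, le_of_eq hrhs]
end
end

section
/- There exists a universal constant C>0 with the following property. Let 0<β≤1, N∈ℕ with N≥1, and M,B,A≥0. Let φ:ℝ³→ℝ satisfy |φ(k)| ≤ M for all k ∈ ℝ³ and ∑_{r∈2πℤ³} φ((u−r)/N^β)² ≤ B²·N^{3β} for all u ∈ ℝ³, and let η:2πℤ³→ℝ satisfy |η_q| ≤ A/(|q|²+1) for all q. Then for every p ∈ 2πℤ³, the sum ∑_{q∈2πℤ³} |φ((p−q)/N^β)|·|η_q| converges and (1/N)·| ∑_{q∈2πℤ³} φ((p−q)/N^β)·η_q | ≤ C·(M+B)·A·N^{β−1}. -/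
open MeasureTheory Real

noncomputable section

/-- sup norm of a lattice index, as a natural number. -/
def msup (q : Fin 3 → ℤ) : ℕ := Finset.univ.sup fun i => (q i).natAbs

lemma norm_latticePt_sq (q : Fin 3 → ℤ) :
    ‖latticePt q‖ ^ 2 = ∑ i : Fin 3, (2 * π * (q i : ℝ)) ^ 2 := by
  rw [EuclideanSpace.norm_eq, Real.sq_sqrt (by positivity)]
  simp only [latticePt, PiLp.toLp_apply, Real.norm_eq_abs, sq_abs]

lemma sq_msup_le (q : Fin 3 → ℤ) : ((msup q : ℝ)) ^ 2 ≤ ‖latticePt q‖ ^ 2 := by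
  obtain ⟨i, -, hi⟩ := Finset.exists_mem_eq_sup (Finset.univ : Finset (Fin 3))
    ⟨0, Finset.mem_univ 0⟩ (fun i => (q i).natAbs)
  rw [norm_latticePt_sq]
  have h1 : ((msup q : ℝ)) ^ 2 = ((q i : ℝ)) ^ 2 := by
    rw [msup, hi]
    push_cast [Nat.cast_natAbs]
    rw [sq_abs]
  have h2 : ((q i : ℝ)) ^ 2 ≤ (2 * π * (q i : ℝ)) ^ 2 := by
    have hπ : (1:ℝ) ≤ 4 * π ^ 2 := by nlinarith [Real.pi_gt_three]
    nlinarith [sq_nonneg ((q i : ℝ))]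
  have h3 : (2 * π * (q i : ℝ)) ^ 2 ≤ ∑ j : Fin 3, (2 * π * (q j : ℝ)) ^ 2 :=
    Finset.single_le_sum (f := fun j => (2 * π * (q j : ℝ)) ^ 2)
      (fun j _ => sq_nonneg _) (Finset.mem_univ i)
  linarith

lemma card_le_of_msup_le (t : Finset (Fin 3 → ℤ)) (T : ℕ) (h : ∀ q ∈ t, msup q ≤ T) :
    (t.card : ℝ) ≤ ((2 * T + 1 : ℕ) : ℝ) ^ 3 := by
  have hsub : t ⊆ Fintype.piFinset fun _ : Fin 3 => Finset.Icc (-(T : ℤ)) T := by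
    intro q hq
    rw [Fintype.mem_piFinset]
    intro i
    have h1 : (q i).natAbs ≤ T :=
      le_trans (Finset.le_sup (f := fun i => (q i).natAbs) (Finset.mem_univ i)) (h q hq)
    rw [Finset.mem_Icc]
    omega
  have hcard : (Fintype.piFinset fun _ : Fin 3 => Finset.Icc (-(T : ℤ)) T).card
      = (2 * T + 1) ^ 3 := by
    rw [Fintype.card_piFinset]
    have : (Finset.Icc (-(T : ℤ)) T).card = 2 * T + 1 := by
      rw [Int.card_Icc]
      omega
    simp [this]
  have := Finset.card_le_card hsub
  rw [hcard] at this
  exact_mod_cast this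

lemma geom_tail_le {r : ℝ} (h0 : 0 ≤ r) (h1 : r < 1) (n : ℕ) :
    ∑ j ∈ Finset.range n, r ^ j ≤ (1 - r)⁻¹ := by
  rw [geom_sum_eq h1.ne, div_le_iff_of_neg (by linarith : r - 1 < 0)]
  have h2 : (1 - r)⁻¹ * (r - 1) = -1 := by
    field_simp
    rw [div_eq_iff (by linarith : (1:ℝ) - r ≠ 0)]
    ring
  rw [h2]
  nlinarith [pow_nonneg h0 n]

/-- there is a universal `C > 0` such that whenever `|φ| ≤ M`,
`∑_{r∈2πℤ³} φ((u−r)/N^β)² ≤ B²N^{3β}` for all `u`, and `|η_q| ≤ A/(|q|²+1)`, then for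
every `p ∈ 2πℤ³` the sum `∑_q |φ((p−q)/N^β)|·|η_q|` converges and
`(1/N)·|∑_q φ((p−q)/N^β)·η_q| ≤ C(M+B)A·N^{β−1}`. -/
theorem statement_9 :
    ∃ C > 0, ∀ (β : ℝ) (N : ℕ) (M B A : ℝ) (φ : E3 → ℝ) (η : (Fin 3 → ℤ) → ℝ),
      0 < β → β ≤ 1 → 1 ≤ N → 0 ≤ M → 0 ≤ B → 0 ≤ A →
      (∀ k : E3, |φ k| ≤ M) →
      (∀ u : E3,
        Summable (fun r : Fin 3 → ℤ => φ (((N : ℝ) ^ β)⁻¹ • (u - latticePt r)) ^ 2) ∧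
        (∑' r : Fin 3 → ℤ, φ (((N : ℝ) ^ β)⁻¹ • (u - latticePt r)) ^ 2)
          ≤ B ^ 2 * (N : ℝ) ^ (3 * β)) →
      (∀ q : Fin 3 → ℤ, |η q| ≤ A / (‖latticePt q‖ ^ 2 + 1)) →
      ∀ p : Fin 3 → ℤ,
        Summable (fun q : Fin 3 → ℤ =>
          |φ (((N : ℝ) ^ β)⁻¹ • (latticePt p - latticePt q))| * |η q|) ∧
        (1 / N : ℝ) * |∑' q : Fin 3 → ℤ,
            φ (((N : ℝ) ^ β)⁻¹ • (latticePt p - latticePt q)) * η q|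
          ≤ C * (M + B) * A * (N : ℝ) ^ (β - 1) := by
  classical
  refine ⟨1024, by norm_num, ?_⟩
  intro β N M B A φ η hβ hβ1 hN hM hB hA hφ hφ2 hη p
  have hN1 : (1:ℝ) ≤ (N:ℝ) := by exact_mod_cast hN
  have hN0 : (0:ℝ) < (N:ℝ) := lt_of_lt_of_le one_pos hN1
  have hR1 : (1:ℝ) ≤ (N:ℝ) ^ β := Real.one_le_rpow hN1 hβ.le
  have hR0 : (0:ℝ) < (N:ℝ) ^ β := lt_of_lt_of_le one_pos hR1
  set R : ℝ := (N:ℝ) ^ β with hRdef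
  set f : (Fin 3 → ℤ) → ℝ :=
    fun q => |φ (R⁻¹ • (latticePt p - latticePt q))| * |η q| with hfdef
  -- lower bound for `‖latticePt q‖² + 1` on a dyadic block
  have hblock_lb : ∀ q : Fin 3 → ℤ,
      ((4:ℝ)) ^ (Nat.log 2 (msup q)) ≤ ‖latticePt q‖ ^ 2 + 1 := by
    intro q
    rcases Nat.eq_zero_or_pos (msup q) with h0 | h0
    · simp only [h0, Nat.log_zero_right, pow_zero]
      nlinarith [sq_nonneg ‖latticePt q‖]
    · have h2 : 2 ^ Nat.log 2 (msup q) ≤ msup q := Nat.pow_log_le_self 2 h0.ne'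
      have h2' : ((2:ℝ)) ^ Nat.log 2 (msup q) ≤ (msup q : ℝ) := by exact_mod_cast h2
      have h3 := sq_msup_le q
      have h4 : ((4:ℝ)) ^ Nat.log 2 (msup q) = (((2:ℝ)) ^ Nat.log 2 (msup q)) ^ 2 := by
        rw [← pow_mul, mul_comm, pow_mul]; norm_num
      have h5 : (((2:ℝ)) ^ Nat.log 2 (msup q)) ^ 2 ≤ ((msup q : ℝ)) ^ 2 := by
        apply pow_le_pow_left₀ (by positivity) h2'
      rw [h4]
      nlinarith
  have hη4 : ∀ q : Fin 3 → ℤ, |η q| ≤ A / 4 ^ (Nat.log 2 (msup q)) := by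
    intro q
    refine le_trans (hη q) ?_
    rw [div_le_div_iff₀ (by positivity) (by positivity)]
    exact mul_le_mul_of_nonneg_left (hblock_lb q) hA
  -- cardinality of any finite subset of a dyadic block
  have hcardblk : ∀ (k : ℕ) (t : Finset (Fin 3 → ℤ)),
      (∀ q ∈ t, Nat.log 2 (msup q) = k) → (t.card : ℝ) ≤ 512 * 8 ^ k := by
    intro k t ht
    have h1 : ∀ q ∈ t, msup q ≤ 2 ^ (k + 1) := by
      intro q hq
      have h := Nat.lt_pow_succ_log_self (by norm_num : 1 < 2) (msup q)
      rw [ht q hq] at h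
      omega
    calc (t.card : ℝ) ≤ ((2 * 2 ^ (k+1) + 1 : ℕ) : ℝ) ^ 3 := card_le_of_msup_le t _ h1
      _ ≤ ((8 * 2 ^ k : ℕ) : ℝ) ^ 3 := by
          have hle : (2 * 2 ^ (k+1) + 1 : ℕ) ≤ 8 * 2 ^ k := by
            have h1 : (1:ℕ) ≤ 2 ^ k := Nat.one_le_pow k 2 (by norm_num)
            have h2 : (2:ℕ) ^ (k+1) = 2 * 2 ^ k := by rw [pow_succ]; ring
            omega
          exact pow_le_pow_left₀ (by positivity) (by exact_mod_cast hle) 3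
      _ = 512 * 8 ^ k := by
          push_cast
          rw [mul_pow, ← pow_mul, mul_comm k 3, pow_mul]
          norm_num
  -- bound on a block using the sup bound `M`
  have fiberA : ∀ (k : ℕ) (t : Finset (Fin 3 → ℤ)),
      (∀ q ∈ t, Nat.log 2 (msup q) = k) → ∑ q ∈ t, f q ≤ 512 * (M * A) * 2 ^ k := by
    intro k t ht
    have hterm : ∀ q ∈ t, f q ≤ M * A / 4 ^ k := by
      intro q hq
      have h1 : |η q| ≤ A / 4 ^ k := (ht q hq) ▸ hη4 q
      calc f q ≤ M * (A / 4 ^ k) := mul_le_mul (hφ _) h1 (abs_nonneg _) hM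
        _ = M * A / 4 ^ k := by ring
    calc ∑ q ∈ t, f q ≤ t.card * (M * A / 4 ^ k) := by
          simpa using Finset.sum_le_card_nsmul t f (M * A / 4 ^ k) hterm
      _ ≤ (512 * 8 ^ k) * (M * A / 4 ^ k) :=
          mul_le_mul_of_nonneg_right (hcardblk k t ht)
            (div_nonneg (mul_nonneg hM hA) (by positivity))
      _ = 512 * (M * A) * ((8:ℝ) ^ k / 4 ^ k) := by ring
      _ = 512 * (M * A) * 2 ^ k := by
          rw [← div_pow]
          norm_num
  -- bound on a block using Cauchy–Schwarz and the ℓ² bound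
  have fiberB : ∀ (k : ℕ) (t : Finset (Fin 3 → ℤ)),
      (∀ q ∈ t, Nat.log 2 (msup q) = k) →
      ∑ q ∈ t, f q ≤ B * (R * Real.sqrt R) * (23 * A) * ((Real.sqrt 2)⁻¹) ^ k := by
    intro k t ht
    have hcs := Finset.sum_mul_sq_le_sq_mul_sq t
      (fun q => |φ (R⁻¹ • (latticePt p - latticePt q))|) (fun q => |η q|)
    have hS1 : ∑ q ∈ t, |φ (R⁻¹ • (latticePt p - latticePt q))| ^ 2
        ≤ B ^ 2 * (N:ℝ) ^ (3 * β) := by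
      have h := hφ2 (latticePt p)
      have he : ∀ q ∈ t, |φ (R⁻¹ • (latticePt p - latticePt q))| ^ 2
          = φ (R⁻¹ • (latticePt p - latticePt q)) ^ 2 := fun q _ => sq_abs _
      rw [Finset.sum_congr rfl he]
      exact le_trans (Summable.sum_le_tsum t (fun q _ => sq_nonneg _) h.1) h.2
    have hS2 : ∑ q ∈ t, |η q| ^ 2 ≤ 512 * A ^ 2 * ((2:ℝ)⁻¹) ^ k := by
      have hterm : ∀ q ∈ t, |η q| ^ 2 ≤ (A / 4 ^ k) ^ 2 := by
        intro q hq
        have h1 : |η q| ≤ A / 4 ^ k := (ht q hq) ▸ hη4 q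
        exact pow_le_pow_left₀ (abs_nonneg _) h1 2
      calc ∑ q ∈ t, |η q| ^ 2 ≤ t.card * (A / 4 ^ k) ^ 2 := by
            simpa using Finset.sum_le_card_nsmul t _ _ hterm
        _ ≤ (512 * 8 ^ k) * (A / 4 ^ k) ^ 2 :=
            mul_le_mul_of_nonneg_right (hcardblk k t ht) (by positivity)
        _ = 512 * A ^ 2 * ((8:ℝ) ^ k / (4 ^ k) ^ 2) := by ring
        _ = 512 * A ^ 2 * ((2:ℝ)⁻¹) ^ k := by
            congr 1
            rw [← pow_mul, mul_comm k 2, pow_mul, ← div_pow]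
            norm_num
    have hnn : 0 ≤ ∑ q ∈ t, f q :=
      Finset.sum_nonneg fun q _ => mul_nonneg (abs_nonneg _) (abs_nonneg _)
    have hRs : 0 ≤ R * Real.sqrt R := mul_nonneg hR0.le (Real.sqrt_nonneg R)
    have hY : 0 ≤ B * (R * Real.sqrt R) * (23 * A) * ((Real.sqrt 2)⁻¹) ^ k :=
      mul_nonneg (mul_nonneg (mul_nonneg hB hRs) (by linarith)) (by positivity)
    rw [← pow_le_pow_iff_left₀ hnn hY (two_ne_zero)]
    have h2 : (∑ q ∈ t, f q) ^ 2
        ≤ (B ^ 2 * (N:ℝ) ^ (3 * β)) * (512 * A ^ 2 * ((2:ℝ)⁻¹) ^ k) := by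
      refine le_trans hcs ?_
      exact mul_le_mul hS1 hS2 (Finset.sum_nonneg fun q _ => sq_nonneg _) (by positivity)
    refine le_trans h2 ?_
    have hNR : (N:ℝ) ^ (3 * β) = R ^ 2 * R := by
      have h : (N:ℝ) ^ (3 * β) = (N:ℝ) ^ (β + β + β) := by ring_nf
      rw [h, Real.rpow_add hN0, Real.rpow_add hN0, hRdef]
      ring
    have e1 : Real.sqrt R ^ 2 = R := Real.sq_sqrt hR0.le
    have e2 : (((Real.sqrt 2)⁻¹) ^ k) ^ 2 = ((2:ℝ)⁻¹) ^ k := by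
      rw [← pow_mul, mul_comm k 2, pow_mul, inv_pow,
        Real.sq_sqrt (by norm_num : (0:ℝ) ≤ 2)]
    have hY2 : (B * (R * Real.sqrt R) * (23 * A) * ((Real.sqrt 2)⁻¹) ^ k) ^ 2
        = 529 * (B ^ 2 * (R ^ 2 * R) * A ^ 2 * ((2:ℝ)⁻¹) ^ k) := by
      calc (B * (R * Real.sqrt R) * (23 * A) * ((Real.sqrt 2)⁻¹) ^ k) ^ 2
          = B ^ 2 * R ^ 2 * (Real.sqrt R ^ 2) * 529 * A ^ 2
              * ((((Real.sqrt 2)⁻¹) ^ k) ^ 2) := by ring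
        _ = 529 * (B ^ 2 * (R ^ 2 * R) * A ^ 2 * ((2:ℝ)⁻¹) ^ k) := by
            rw [e1, e2]; ring
    rw [hY2, hNR]
    have hc : 0 ≤ B ^ 2 * (R ^ 2 * R) * A ^ 2 * ((2:ℝ)⁻¹) ^ k :=
      mul_nonneg (mul_nonneg (mul_nonneg (sq_nonneg B)
        (mul_nonneg (sq_nonneg R) hR0.le)) (sq_nonneg A))
        (pow_nonneg (by norm_num) k)
    have hL : B ^ 2 * (R ^ 2 * R) * (512 * A ^ 2 * ((2:ℝ)⁻¹) ^ k)
        = 512 * (B ^ 2 * (R ^ 2 * R) * A ^ 2 * ((2:ℝ)⁻¹) ^ k) := by ring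
    rw [hL]
    linarith
  -- the key uniform bound over finite sets
  have hMA : 0 ≤ M * A := mul_nonneg hM hA
  have hBA : 0 ≤ B * A := mul_nonneg hB hA
  have hRs : 0 ≤ R * Real.sqrt R := mul_nonneg hR0.le (Real.sqrt_nonneg R)
  have hY0 : 0 ≤ B * (R * Real.sqrt R) * (23 * A) :=
    mul_nonneg (mul_nonneg hB hRs) (by linarith)
  have key : ∀ s : Finset (Fin 3 → ℤ), ∑ q ∈ s, f q ≤ 1024 * (M + B) * A * R := by
    intro s
    set K := Nat.log 2 ⌊R⌋₊ with hKdef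
    have hfl1 : 1 ≤ ⌊R⌋₊ := Nat.le_floor (by exact_mod_cast hR1)
    have h2K : ((2:ℝ)) ^ (K + 1) ≤ 2 * R := by
      have h1 : 2 ^ K ≤ ⌊R⌋₊ := Nat.pow_log_le_self 2 (by omega)
      have h2 : ((⌊R⌋₊ : ℝ)) ≤ R := Nat.floor_le hR0.le
      have h3 : ((2:ℝ)) ^ K ≤ R := le_trans (by exact_mod_cast h1) h2
      calc ((2:ℝ)) ^ (K+1) = 2 * 2 ^ K := by ring
        _ ≤ 2 * R := by linarith
    have hRK : R ≤ ((2:ℝ)) ^ (K + 1) := by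
      have h1 : ⌊R⌋₊ < 2 ^ (K + 1) := Nat.lt_pow_succ_log_self (by norm_num) _
      have h2 : R < (⌊R⌋₊ : ℝ) + 1 := Nat.lt_floor_add_one R
      have h3 : ((⌊R⌋₊ : ℝ)) + 1 ≤ ((2:ℝ)) ^ (K+1) := by exact_mod_cast Nat.succ_le_of_lt h1
      linarith
    rw [← Finset.sum_fiberwise_of_maps_to
        (g := fun q => Nat.log 2 (msup q)) (t := s.image fun q => Nat.log 2 (msup q))
        (fun q hq => Finset.mem_image_of_mem _ hq) f]
    set I := s.image fun q => Nat.log 2 (msup q) with hIdef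
    set r : ℝ := (Real.sqrt 2)⁻¹ with hrdef
    have hr0 : 0 ≤ r := by positivity
    have hsqrt2 : 1 < Real.sqrt 2 := by
      rw [show (1:ℝ) = Real.sqrt 1 from (Real.sqrt_one).symm]
      exact Real.sqrt_lt_sqrt (by norm_num) (by norm_num)
    have hr1 : r < 1 := by
      rw [hrdef]
      exact inv_lt_one_of_one_lt₀ hsqrt2
    set G : ℕ → ℝ := fun k => if k ≤ K then 512 * (M * A) * 2 ^ k
        else B * (R * Real.sqrt R) * (23 * A) * r ^ k with hGdef
    have hG0 : ∀ k, 0 ≤ G k := by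
      intro k
      rw [hGdef]
      dsimp only
      split
      · exact mul_nonneg (mul_nonneg (by norm_num) hMA) (by positivity)
      · exact mul_nonneg hY0 (pow_nonneg hr0 _)
    have step1 : ∑ k ∈ I, (∑ q ∈ s.filter (fun q => Nat.log 2 (msup q) = k), f q)
        ≤ ∑ k ∈ I, G k := by
      apply Finset.sum_le_sum
      intro k hk
      have hfib : ∀ q ∈ s.filter (fun q => Nat.log 2 (msup q) = k),
          Nat.log 2 (msup q) = k := fun q hq => (Finset.mem_filter.mp hq).2
      rw [hGdef]
      dsimp only
      split
      · exact fiberA k _ hfib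
      · exact fiberB k _ hfib
    set n := I.sup id + 1 with hndef
    have step2 : ∑ k ∈ I, G k ≤ ∑ k ∈ Finset.range n, G k := by
      apply Finset.sum_le_sum_of_subset_of_nonneg
      · intro k hk
        rw [Finset.mem_range, hndef]
        exact Nat.lt_succ_of_le (Finset.le_sup (f := id) hk)
      · intro k _ _
        exact hG0 k
    have step3 : ∑ k ∈ Finset.range n, G k
        = (∑ k ∈ (Finset.range n).filter (fun k => k ≤ K), 512 * (M * A) * 2 ^ k)
          + ∑ k ∈ (Finset.range n).filter (fun k => ¬ k ≤ K),
              B * (R * Real.sqrt R) * (23 * A) * r ^ k := by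
      rw [hGdef]
      exact Finset.sum_ite _ _
    have pieceA : ∑ k ∈ (Finset.range n).filter (fun k => k ≤ K), 512 * (M * A) * 2 ^ k
        ≤ 512 * (M * A) * (2 * R) := by
      have hsub : (Finset.range n).filter (fun k => k ≤ K) ⊆ Finset.range (K + 1) := by
        intro k hk
        rw [Finset.mem_range]
        have := (Finset.mem_filter.mp hk).2
        omega
      calc ∑ k ∈ (Finset.range n).filter (fun k => k ≤ K), 512 * (M * A) * 2 ^ k
          ≤ ∑ k ∈ Finset.range (K + 1), 512 * (M * A) * (2:ℝ) ^ k :=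
            Finset.sum_le_sum_of_subset_of_nonneg hsub
              (fun k _ _ => mul_nonneg (mul_nonneg (by norm_num) hMA) (by positivity))
        _ = 512 * (M * A) * ∑ k ∈ Finset.range (K + 1), (2:ℝ) ^ k := by
            rw [Finset.mul_sum]
        _ ≤ 512 * (M * A) * (2 * R) := by
            apply mul_le_mul_of_nonneg_left ?_ (mul_nonneg (by norm_num) hMA)
            have hg : ∑ k ∈ Finset.range (K + 1), (2:ℝ) ^ k = 2 ^ (K + 1) - 1 := by
              rw [geom_sum_eq (by norm_num : (2:ℝ) ≠ 1)]
              norm_num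
            rw [hg]
            linarith
    have pieceB : ∑ k ∈ (Finset.range n).filter (fun k => ¬ k ≤ K),
        B * (R * Real.sqrt R) * (23 * A) * r ^ k ≤ 92 * B * A * R := by
      have heq : (Finset.range n).filter (fun k => ¬ k ≤ K) = Finset.Ico (K + 1) n := by
        ext k
        simp only [Finset.mem_filter, Finset.mem_range, Finset.mem_Ico]
        omega
      rw [heq]
      have h1r : (0:ℝ) ≤ (1 - r)⁻¹ := le_of_lt (inv_pos.mpr (by linarith))
      have hgeo : ∑ k ∈ Finset.Ico (K + 1) n, r ^ k ≤ r ^ (K + 1) * (1 - r)⁻¹ := by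
        rcases le_or_gt n (K + 1) with h | h
        · rw [Finset.Ico_eq_empty (by omega)]
          simp only [Finset.sum_empty]
          exact mul_nonneg (pow_nonneg hr0 _) h1r
        · rw [Finset.sum_Ico_eq_sum_range]
          have he : ∀ j ∈ Finset.range (n - (K + 1)), r ^ (K + 1 + j) = r ^ (K + 1) * r ^ j :=
            fun j _ => pow_add r (K + 1) j
          rw [Finset.sum_congr rfl he, ← Finset.mul_sum]
          exact mul_le_mul_of_nonneg_left (geom_tail_le hr0 hr1 _) (pow_nonneg hr0 _)
      have hrK : r ^ (K + 1) ≤ (Real.sqrt R)⁻¹ := by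
        rw [hrdef, inv_pow]
        have h1 : Real.sqrt R ≤ (Real.sqrt 2) ^ (K + 1) := by
          have h2 : ((2:ℝ)) ^ (K + 1) = ((Real.sqrt 2) ^ (K + 1)) ^ 2 := by
            rw [← pow_mul, mul_comm (K+1) 2, pow_mul,
              Real.sq_sqrt (by norm_num : (0:ℝ) ≤ 2)]
          calc Real.sqrt R ≤ Real.sqrt ((2:ℝ) ^ (K + 1)) := Real.sqrt_le_sqrt hRK
            _ = (Real.sqrt 2) ^ (K + 1) := by
                rw [h2, Real.sqrt_sq (by positivity)]
        exact inv_anti₀ (Real.sqrt_pos.mpr hR0) h1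
      have hinv : (1 - r)⁻¹ ≤ 4 := by
        have h43 : (4/3:ℝ) ≤ Real.sqrt 2 := by
          calc (4/3:ℝ) = Real.sqrt ((4/3) ^ 2) := by
                rw [Real.sqrt_sq (by norm_num)]
            _ ≤ Real.sqrt 2 := Real.sqrt_le_sqrt (by norm_num)
        have h1 : r ≤ 3/4 := by
          rw [hrdef]
          calc (Real.sqrt 2)⁻¹ ≤ ((4:ℝ)/3)⁻¹ := inv_anti₀ (by norm_num) h43
            _ ≤ 3/4 := by norm_num
        have h2 : (1:ℝ)/4 ≤ 1 - r := by linarith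
        calc (1 - r)⁻¹ ≤ ((1:ℝ)/4)⁻¹ := inv_anti₀ (by norm_num) h2
          _ = 4 := by norm_num
      have hrpos : 0 < Real.sqrt R := Real.sqrt_pos.mpr hR0
      calc ∑ k ∈ Finset.Ico (K + 1) n, B * (R * Real.sqrt R) * (23 * A) * r ^ k
          = B * (R * Real.sqrt R) * (23 * A) * ∑ k ∈ Finset.Ico (K + 1) n, r ^ k := by
            rw [← Finset.mul_sum]
        _ ≤ B * (R * Real.sqrt R) * (23 * A) * (r ^ (K + 1) * (1 - r)⁻¹) :=
            mul_le_mul_of_nonneg_left hgeo hY0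
        _ ≤ B * (R * Real.sqrt R) * (23 * A) * ((Real.sqrt R)⁻¹ * 4) := by
            apply mul_le_mul_of_nonneg_left ?_ hY0
            exact mul_le_mul hrK hinv h1r (inv_nonneg.mpr hrpos.le)
        _ = 92 * B * A * R * (Real.sqrt R * (Real.sqrt R)⁻¹) := by ring
        _ = 92 * B * A * R := by
            rw [mul_inv_cancel₀ (ne_of_gt hrpos)]
            ring
    have hfinal : 512 * (M * A) * (2 * R) + 92 * B * A * R ≤ 1024 * (M + B) * A * R := by
      have h0 : 0 ≤ B * A * R := mul_nonneg hBA hR0.le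
      nlinarith [h0]
    calc ∑ k ∈ I, (∑ q ∈ s.filter (fun q => Nat.log 2 (msup q) = k), f q)
        ≤ ∑ k ∈ I, G k := step1
      _ ≤ ∑ k ∈ Finset.range n, G k := step2
      _ = _ := step3
      _ ≤ 512 * (M * A) * (2 * R) + 92 * B * A * R := add_le_add pieceA pieceB
      _ ≤ 1024 * (M + B) * A * R := hfinal
  have hf0 : (0 : (Fin 3 → ℤ) → ℝ) ≤ f := fun q => mul_nonneg (abs_nonneg _) (abs_nonneg _)
  have hsummable : Summable f := summable_of_sum_le hf0 key
  refine ⟨hsummable, ?_⟩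
  have habs : Summable fun q => |φ (R⁻¹ • (latticePt p - latticePt q)) * η q| := by
    have : (fun q => |φ (R⁻¹ • (latticePt p - latticePt q)) * η q|) = f := by
      funext q
      rw [hfdef, abs_mul]
    rw [this]
    exact hsummable
  have h1 : |∑' q, φ (R⁻¹ • (latticePt p - latticePt q)) * η q|
      ≤ ∑' q, |φ (R⁻¹ • (latticePt p - latticePt q))| * |η q| := by
    simpa [Real.norm_eq_abs, abs_mul] using
      norm_tsum_le_tsum_norm (f := fun q => φ (R⁻¹ • (latticePt p - latticePt q)) * η q)
        (by simpa [Real.norm_eq_abs, abs_mul] using hsummable)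
  have h2 : ∑' q, |φ (R⁻¹ • (latticePt p - latticePt q))| * |η q| = ∑' q, f q := rfl
  have h3 : ∑' q, f q ≤ 1024 * (M + B) * A * R := Summable.tsum_le_of_sum_le hsummable key
  have h4 : (N:ℝ) ^ (β - 1) = R / N := by
    rw [hRdef, Real.rpow_sub hN0, Real.rpow_one]
  calc (1 / N : ℝ) * |∑' q, φ (R⁻¹ • (latticePt p - latticePt q)) * η q|
      ≤ (1 / N : ℝ) * (1024 * (M + B) * A * R) := by
        apply mul_le_mul_of_nonneg_left _ (by positivity)
        calc |∑' q, φ (R⁻¹ • (latticePt p - latticePt q)) * η q|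
            ≤ ∑' q, |φ (R⁻¹ • (latticePt p - latticePt q))| * |η q| := h1
          _ = ∑' q, f q := h2
          _ ≤ 1024 * (M + B) * A * R := h3
    _ = 1024 * (M + B) * A * ((N:ℝ) ^ (β - 1)) := by
        rw [h4]
        ring
end
end

section
/- For every real v ≥ 0, the family p ↦ |p|² + v − √(|p|⁴+2|p|²·v) − v²/(2|p|²), indexed by p ∈ 2πℤ³∖{0}, is (absolutely) summable. -/
open MeasureTheory Real

noncomputable section

/-- Index type for the punctured lattice `Λ*₊ = 2πℤ³ \ {0}`. -/
abbrev NZ : Type := {n : Fin 3 → ℤ // n ≠ 0}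

/-- Analytic bound: `|x + v − √(x²+2xv) − v²/(2x)| ≤ v³/(2x²)`. -/
lemma aux_abs (x v : ℝ) (hx : 0 < x) (hv : 0 ≤ v) :
    |x + v - Real.sqrt (x ^ 2 + 2 * x * v) - v ^ 2 / (2 * x)| ≤ v ^ 3 / (2 * x ^ 2) := by
  set s := Real.sqrt (x ^ 2 + 2 * x * v) with hs
  have harg : 0 ≤ x ^ 2 + 2 * x * v := by positivity
  have hs0 : 0 ≤ s := Real.sqrt_nonneg _
  have hs2 : s ^ 2 = x ^ 2 + 2 * x * v := Real.sq_sqrt harg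
  have hxs : x ≤ s := by nlinarith
  have hsxv : s ≤ x + v := by nlinarith
  have hu : 2 * x * (x + v - s) ≤ v ^ 2 := by
    nlinarith [mul_nonneg (sub_nonneg.2 hsxv) (by nlinarith : (0:ℝ) ≤ v + s - x)]
  have h2x : (0:ℝ) < 2 * x := by positivity
  have h2x2 : (0:ℝ) < 2 * x ^ 2 := by positivity
  have hA : x + v - s - v ^ 2 / (2 * x) ≤ v ^ 3 / (2 * x ^ 2) := by
    have h1 : x + v - s ≤ v ^ 2 / (2 * x) := by
      rw [le_div_iff₀ h2x]; nlinarith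
    have h0 : (0:ℝ) ≤ v ^ 3 / (2 * x ^ 2) := by positivity
    linarith
  have hid : v ^ 2 * x - 2 * x ^ 2 * (x + v - s) = x * (x + v - s) * (v + s - x) := by
    linear_combination x * hs2
  have hE : v + s - x ≤ 2 * v := by linarith
  have hF : (0:ℝ) ≤ v + s - x := by linarith
  have hprod : (2 * x * (x + v - s)) * (v + s - x) ≤ v ^ 2 * (2 * v) :=
    mul_le_mul hu hE hF (by positivity)
  have key : v ^ 2 * x - 2 * x ^ 2 * (x + v - s) ≤ v ^ 3 := by nlinarith
  have hB : v ^ 2 / (2 * x) - (x + v - s) ≤ v ^ 3 / (2 * x ^ 2) := by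
    rw [le_div_iff₀ h2x2, sub_mul]
    have heq : v ^ 2 / (2 * x) * (2 * x ^ 2) = v ^ 2 * x := by
      field_simp
    rw [heq]; nlinarith
  rw [abs_le]
  constructor <;> linarith

lemma sum1 : Summable fun m : ℤ => (1 + |(m : ℝ)|) ^ (-(4 / 3) : ℝ) := by
  have h1 : Summable fun m : ℤ => |(m : ℝ)| ^ (-(4 / 3) : ℝ) :=
    Real.summable_abs_int_rpow (by norm_num)
  have h2 : Summable fun m : ℤ => (if m = 0 then (1:ℝ) else 0) := by
    apply summable_of_ne_finset_zero (s := {0})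
    intro b hb
    simp only [Finset.mem_singleton] at hb
    simp [hb]
  apply Summable.of_nonneg_of_le (fun m => by positivity) _ (h1.add h2)
  intro m
  by_cases hm : m = 0
  · subst hm
    simp [Real.zero_rpow (by norm_num : (-(4/3):ℝ) ≠ 0)]
  · have hm1 : (1:ℝ) ≤ |(m : ℝ)| := by
      rw [← Int.cast_abs]
      exact_mod_cast Int.one_le_abs (by simpa using hm)
    have : (1 + |(m : ℝ)|) ^ (-(4 / 3) : ℝ) ≤ |(m : ℝ)| ^ (-(4 / 3) : ℝ) :=
      Real.rpow_le_rpow_of_nonpos (by linarith) (by linarith) (by norm_num)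
    simp only [hm, if_false, add_zero]
    exact this

/-- Equivalence `ℤ × ℤ × ℤ ≃ (Fin 3 → ℤ)`. -/
def e3 : ℤ × ℤ × ℤ ≃ (Fin 3 → ℤ) where
  toFun p := ![p.1, p.2.1, p.2.2]
  invFun f := (f 0, f 1, f 2)
  left_inv p := rfl
  right_inv f := by
    funext i
    fin_cases i <;> rfl
set_option maxHeartbeats 1000000 in
lemma sum3 : Summable fun n : Fin 3 → ℤ => ∏ i, (1 + |(n i : ℝ)|) ^ (-(4 / 3) : ℝ) := by
  have h23 : Summable fun p : ℤ × ℤ =>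
      (1 + |(p.1 : ℝ)|) ^ (-(4 / 3) : ℝ) * (1 + |(p.2 : ℝ)|) ^ (-(4 / 3) : ℝ) :=
    sum1.mul_of_nonneg sum1 (fun _ => by positivity) (fun _ => by positivity)
  have h : Summable fun p : ℤ × ℤ × ℤ =>
      (1 + |(p.1 : ℝ)|) ^ (-(4 / 3) : ℝ) *
        ((1 + |(p.2.1 : ℝ)|) ^ (-(4 / 3) : ℝ) * (1 + |(p.2.2 : ℝ)|) ^ (-(4 / 3) : ℝ)) :=
    sum1.mul_of_nonneg h23 (fun _ => by positivity) (fun _ => by positivity)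
  have key : Summable ((fun n : Fin 3 → ℤ => ∏ i, (1 + |(n i : ℝ)|) ^ (-(4 / 3) : ℝ)) ∘ e3) := by
    refine h.congr fun p => ?_
    simp only [Function.comp_apply, Fin.prod_univ_three, e3, Equiv.coe_fn_mk,
      Matrix.cons_val_zero, Matrix.cons_val_one, Matrix.head_cons]
    norm_num [mul_assoc]
    rfl
  exact (Equiv.summable_iff e3).mp key

set_option maxHeartbeats 1000000 in
/-- for every `v ≥ 0` the family
`p ↦ |p|² + v − √(|p|⁴+2|p|²v) − v²/(2|p|²)`, `p ∈ Λ*₊`, is (absolutely) summable. -/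
theorem statement_11 (v : ℝ) (hv : 0 ≤ v) :
    Summable (fun n : NZ =>
      ‖latticePt n.1‖ ^ 2 + v
        - Real.sqrt (‖latticePt n.1‖ ^ 4 + 2 * ‖latticePt n.1‖ ^ 2 * v)
        - v ^ 2 / (2 * ‖latticePt n.1‖ ^ 2)) := by
  have hπ : (0:ℝ) < π := Real.pi_pos
  set C : ℝ := v ^ 3 / (2 * π ^ 4) with hC
  have hsub : Summable fun n : NZ => ∏ i, (1 + |(n.1 i : ℝ)|) ^ (-(4 / 3) : ℝ) :=
    sum3.subtype {n : Fin 3 → ℤ | n ≠ 0}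
  refine Summable.of_norm_bounded (hsub.mul_left C) ?_
  rintro ⟨n, hn⟩
  -- the norm of the lattice point
  have hlz : latticePt n ≠ 0 := by
    intro h
    apply hn
    funext i
    have h0 : 2 * π * (n i : ℝ) = 0 := by
      have := congrArg (fun x : E3 => x i) h
      simpa [latticePt] using this
    have h2π : (2 * π : ℝ) ≠ 0 := by positivity
    have : (n i : ℝ) = 0 := by
      rcases mul_eq_zero.mp h0 with h' | h'
      · exact absurd h' h2π
      · exact h'
    exact_mod_cast this
  have hL : 0 < ‖latticePt n‖ := norm_pos_iff.mpr hlz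
  set L : ℝ := ‖latticePt n‖ with hLdef
  have hL2 : (0:ℝ) < L ^ 2 := by positivity
  -- sum formula for L²
  have hLsum : L ^ 2 = (2*π*(n 0 : ℝ))^2 + (2*π*(n 1 : ℝ))^2 + (2*π*(n 2 : ℝ))^2 := by
    rw [hLdef, EuclideanSpace.norm_eq, Real.sq_sqrt (by positivity)]
    simp only [latticePt, PiLp.toLp_apply, Real.norm_eq_abs, sq_abs, Fin.sum_univ_three]
  -- the max of the coordinates
  set m0 : ℝ := |(n 0 : ℝ)| with hm0
  set m1 : ℝ := |(n 1 : ℝ)| with hm1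
  set m2 : ℝ := |(n 2 : ℝ)| with hm2
  set M : ℝ := max (max m0 m1) m2 with hM
  have hMm0 : m0 ≤ M := le_trans (le_max_left _ _) (le_max_left _ _)
  have hMm1 : m1 ≤ M := le_trans (le_max_right _ _) (le_max_left _ _)
  have hMm2 : m2 ≤ M := le_max_right _ _
  have hM1 : (1:ℝ) ≤ M := by
    have : ∃ i, n i ≠ 0 := by
      by_contra h
      push_neg at h
      exact hn (funext h)
    obtain ⟨i, hi⟩ := this
    have h1 : (1:ℝ) ≤ |(n i : ℝ)| := by
      rw [← Int.cast_abs]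
      exact_mod_cast Int.one_le_abs hi
    fin_cases i
    · exact le_trans h1 hMm0
    · exact le_trans h1 hMm1
    · exact le_trans h1 hMm2
  have hM0 : (0:ℝ) < M := by linarith
  have hm0' : (0:ℝ) ≤ m0 := abs_nonneg _
  have hm1' : (0:ℝ) ≤ m1 := abs_nonneg _
  have hm2' : (0:ℝ) ≤ m2 := abs_nonneg _
  -- L² ≥ 4π²M²
  have hx2 : 4 * π ^ 2 * M ^ 2 ≤ L ^ 2 := by
    have habs : ∀ a : ℝ, (2*π*a)^2 = 4*π^2*|a|^2 := fun a => by rw [sq_abs]; ring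
    rw [hLsum, habs, habs, habs]
    rcases max_cases (max m0 m1) m2 with ⟨h, _⟩ | ⟨h, _⟩
    · rcases max_cases m0 m1 with ⟨h', _⟩ | ⟨h', _⟩ <;>
        · rw [hM, h, h']
          nlinarith [sq_nonneg π, sq_nonneg (π * m0), sq_nonneg (π * m1), sq_nonneg (π * m2)]
    · rw [hM, h]
      nlinarith [sq_nonneg π, sq_nonneg (π * m0), sq_nonneg (π * m1), sq_nonneg (π * m2)]
  -- the product and its rpow bound
  set P : ℝ := (1 + m0) * ((1 + m1) * (1 + m2)) with hP
  have hP0 : (0:ℝ) < P := by positivity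
  have hP8 : P ≤ 8 * M ^ 3 := by
    have e0 : 1 + m0 ≤ 2 * M := by linarith
    have e1 : 1 + m1 ≤ 2 * M := by linarith
    have e2 : 1 + m2 ≤ 2 * M := by linarith
    have h12 : (1 + m1) * (1 + m2) ≤ (2*M) * (2*M) :=
      mul_le_mul e1 e2 (by linarith) (by linarith)
    calc P ≤ (2*M) * ((2*M) * (2*M)) :=
          mul_le_mul e0 h12 (by positivity) (by linarith)
      _ = 8 * M ^ 3 := by ring
  have hQ : P ^ ((4:ℝ)/3) ≤ 16 * M ^ 4 := by
    have h1 : P ^ ((4:ℝ)/3) ≤ (8 * M ^ 3) ^ ((4:ℝ)/3) :=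
      Real.rpow_le_rpow hP0.le hP8 (by norm_num)
    have h2 : (8 * M ^ 3 : ℝ) ^ ((4:ℝ)/3) = 16 * M ^ 4 := by
      rw [Real.mul_rpow (by norm_num) (by positivity)]
      have h8 : (8:ℝ) ^ ((4:ℝ)/3) = 16 := by
        rw [show (8:ℝ) = (2:ℝ) ^ ((3:ℕ):ℝ) by rw [Real.rpow_natCast]; norm_num,
          ← Real.rpow_mul (by norm_num)]
        rw [show ((3:ℕ):ℝ) * ((4:ℝ)/3) = ((4:ℕ):ℝ) by push_cast; ring, Real.rpow_natCast]
        norm_num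
      have hM4 : (M ^ 3 : ℝ) ^ ((4:ℝ)/3) = M ^ 4 := by
        rw [show (M ^ 3 : ℝ) = M ^ ((3:ℕ):ℝ) by rw [Real.rpow_natCast],
          ← Real.rpow_mul hM0.le]
        rw [show ((3:ℕ):ℝ) * ((4:ℝ)/3) = ((4:ℕ):ℝ) by push_cast; ring, Real.rpow_natCast]
      rw [h8, hM4]
    linarith [h1, h2.le]
  -- L⁴ ≥ π⁴ P^{4/3}
  have hL4 : π ^ 4 * P ^ ((4:ℝ)/3) ≤ L ^ 4 := by
    have h16 : 16 * π ^ 4 * M ^ 4 ≤ L ^ 4 := by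
      have := mul_le_mul hx2 hx2 (by positivity) (by positivity)
      nlinarith
    nlinarith [hQ, pow_pos hπ 4]
  -- rewrite the product of rpow's
  have hprodeq : (∏ i, (1 + |(n i : ℝ)|) ^ (-(4 / 3) : ℝ)) = (P ^ ((4:ℝ)/3))⁻¹ := by
    rw [Fin.prod_univ_three, hP,
      Real.mul_rpow (by positivity) (by positivity),
      Real.mul_rpow (by positivity) (by positivity), mul_inv, mul_inv,
      Real.rpow_neg (by positivity : (0:ℝ) ≤ 1 + |(n 0 : ℝ)|),
      Real.rpow_neg (by positivity : (0:ℝ) ≤ 1 + |(n 1 : ℝ)|),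
      Real.rpow_neg (by positivity : (0:ℝ) ≤ 1 + |(n 2 : ℝ)|)]
    ring
  -- the analytic bound
  have hbound := aux_abs (L ^ 2) v hL2 hv
  rw [show (L ^ 2) ^ 2 + 2 * L ^ 2 * v = L ^ 4 + 2 * L ^ 2 * v by ring] at hbound
  rw [Real.norm_eq_abs]
  refine le_trans hbound ?_
  show v ^ 3 / (2 * (L ^ 2) ^ 2) ≤ C * ∏ i, (1 + |(n i : ℝ)|) ^ (-(4 / 3) : ℝ)
  rw [hprodeq, show (L ^ 2) ^ 2 = L ^ 4 by ring]
  have hPq : (0:ℝ) < P ^ ((4:ℝ)/3) := Real.rpow_pos_of_pos hP0 _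
  have hfinal : C * (P ^ ((4:ℝ)/3))⁻¹ = v ^ 3 / (2 * π ^ 4 * P ^ ((4:ℝ)/3)) := by
    rw [hC]
    field_simp
  rw [hfinal]
  apply div_le_div_of_nonneg_left (by positivity) (by positivity)
  linarith

end
end

section
/- Let M,L>0 and κ>0 with κ·M ≤ π², and let W:ℝ³→ℝ satisfy |W(k)| ≤ M and |W(k)−W(0)| ≤ L·|k| for all k ∈ ℝ³. Define, for p ∈ 2πℤ³∖{0} and v ∈ ℝ, e_p(v) = −|p|² − κ·v + √(|p|⁴+2|p|²·κ·v) + κ²·v²/(2|p|²). Then there exists a constant C>0, depending only on M, L and κ, such that for every β>0, every N≥1 and every p ∈ 2πℤ³∖{0}: | e_p(W(p/N^β)) − e_p(W(0)) | ≤ C·N^{−β}/|p|³. -/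
open MeasureTheory Real

noncomputable section

/-- `e_p(v) = −|p|² − κv + √(|p|⁴+2|p|²κv) + κ²v²/(2|p|²)`. -/
def bogE (κ : ℝ) (p : E3) (v : ℝ) : ℝ :=
  -‖p‖ ^ 2 - κ * v + Real.sqrt (‖p‖ ^ 4 + 2 * ‖p‖ ^ 2 * κ * v)
    + κ ^ 2 * v ^ 2 / (2 * ‖p‖ ^ 2)

lemma derivBound (M κ P v : ℝ) (hM : 0 < M) (hκ : 0 < κ) (hP : 4 * π ^ 2 ≤ P)
    (hκM : κ * M ≤ π ^ 2) (hv : |v| ≤ M) :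
    |(-κ + P * κ / Real.sqrt (P ^ 2 + 2 * P * κ * v) + κ ^ 2 * v / P)|
      ≤ 4 * κ ^ 3 * M ^ 2 / P ^ 2 := by
  have hπ : (0:ℝ) < π ^ 2 := by positivity
  have hP0 : 0 < P := by nlinarith
  have hvM : -M ≤ v ∧ v ≤ M := abs_le.mp hv
  have h1 : κ * (-M) ≤ κ * v := mul_le_mul_of_nonneg_left hvM.1 hκ.le
  have h2 : P * (κ * M) ≤ P * π ^ 2 := mul_le_mul_of_nonneg_left hκM hP0.le
  have h3 : P * (4 * π ^ 2) ≤ P * P := mul_le_mul_of_nonneg_left hP hP0.le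
  have h4 : P * (κ * (-M)) ≤ P * (κ * v) := mul_le_mul_of_nonneg_left h1 hP0.le
  have hA : P ^ 2 / 2 ≤ P ^ 2 + 2 * P * κ * v := by nlinarith
  set t := Real.sqrt (P ^ 2 + 2 * P * κ * v) with htdef
  have hApos : 0 < P ^ 2 + 2 * P * κ * v := by nlinarith
  have ht2 : t ^ 2 = P ^ 2 + 2 * P * κ * v := Real.sq_sqrt hApos.le
  have ht0 : 0 < t := Real.sqrt_pos.mpr hApos
  have htlb : P ^ 2 ≤ 2 * t ^ 2 := by rw [ht2]; nlinarith
  have hE : (-κ + P * κ / t + κ ^ 2 * v / P) * (2 * t * P ^ 2)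
      = κ * (t - P) ^ 2 * (t + 2 * P) := by
    field_simp
    linear_combination (-t) * ht2
  have hF : (t - P) * (t + P) = 2 * P * κ * v := by linear_combination ht2
  have hXnn : 0 ≤ -κ + P * κ / t + κ ^ 2 * v / P := by
    have hR : 0 ≤ κ * (t - P) ^ 2 * (t + 2 * P) := by positivity
    nlinarith [hE, hR, mul_pos (mul_pos two_pos ht0) (pow_pos hP0 2)]
  rw [abs_of_nonneg hXnn, le_div_iff₀ (pow_pos hP0 2)]
  have hv2 : v ^ 2 ≤ M ^ 2 := sq_le_sq' hvM.1 hvM.2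
  have h5 : (t - P) ^ 2 * (t + P) ^ 2 = 4 * P ^ 2 * κ ^ 2 * v ^ 2 := by
    linear_combination ((t - P) * (t + P) + 2 * P * κ * v) * hF
  have h6 : (t - P) ^ 2 * (t + P) ^ 2 ≤ 4 * P ^ 2 * κ ^ 2 * M ^ 2 := by
    nlinarith [mul_le_mul_of_nonneg_left hv2 (by positivity : (0:ℝ) ≤ 4 * P ^ 2 * κ ^ 2)]
  have h8 : κ * (t + 2 * P) * ((t - P) ^ 2 * (t + P) ^ 2)
      ≤ κ * (t + 2 * P) * (4 * P ^ 2 * κ ^ 2 * M ^ 2) :=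
    mul_le_mul_of_nonneg_left h6 (by positivity)
  have h9 : 4 * P ^ 2 * (t + 2 * P) ≤ 8 * t * (t + P) ^ 2 := by
    have ha : 0 ≤ P * (2 * t ^ 2 - P ^ 2) := mul_nonneg hP0.le (by linarith)
    have hb : (0:ℝ) < t ^ 3 := pow_pos ht0 3
    have hc : (0:ℝ) < t * P ^ 2 := by positivity
    have hd : 8 * t * (t + P) ^ 2 - 4 * P ^ 2 * (t + 2 * P)
        = 8 * t ^ 3 + 16 * t ^ 2 * P + 4 * t * P ^ 2 - 8 * P ^ 3 := by ring
    linarith [ha, hb, hc, hd]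
  have h11 : κ * (t - P) ^ 2 * (t + 2 * P) ≤ 8 * κ ^ 3 * M ^ 2 * t := by
    have hq : (0:ℝ) < (t + P) ^ 2 := by positivity
    refine le_of_mul_le_mul_right ?_ hq
    have h12 : κ ^ 3 * M ^ 2 * (4 * P ^ 2 * (t + 2 * P)) ≤ κ ^ 3 * M ^ 2 * (8 * t * (t + P) ^ 2) :=
      mul_le_mul_of_nonneg_left h9 (by positivity)
    linarith [h8, h12]
  refine le_of_mul_le_mul_right ?_ (by positivity : (0:ℝ) < 2 * t)
  calc (-κ + P * κ / t + κ ^ 2 * v / P) * P ^ 2 * (2 * t)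
      = (-κ + P * κ / t + κ ^ 2 * v / P) * (2 * t * P ^ 2) := by ring
    _ = κ * (t - P) ^ 2 * (t + 2 * P) := hE
    _ ≤ 8 * κ ^ 3 * M ^ 2 * t := h11
    _ = 4 * κ ^ 3 * M ^ 2 * (2 * t) := by ring

lemma lattice_sq_norm (n : Fin 3 → ℤ) (hn : n ≠ 0) : 4 * π ^ 2 ≤ ‖latticePt n‖ ^ 2 := by
  obtain ⟨i, hi⟩ := Function.ne_iff.mp hn
  have hi' : n i ≠ 0 := by simpa using hi
  have hnorm : ‖latticePt n‖ ^ 2 = ∑ j : Fin 3, (2 * π * (n j : ℝ)) ^ 2 := by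
    rw [EuclideanSpace.norm_eq, Real.sq_sqrt (by positivity)]
    simp [latticePt, Real.norm_eq_abs, mul_pow, sq_abs, abs_of_nonneg Real.pi_pos.le]
  rw [hnorm]
  have h1 : (1:ℝ) ≤ (n i : ℝ) ^ 2 := by
    have h2 : (1:ℝ) ≤ |(n i : ℝ)| := by
      have := Int.one_le_abs hi'
      exact_mod_cast (by exact_mod_cast this : (1:ℝ) ≤ |(n i : ℤ)|)
    calc (1:ℝ) = 1 ^ 2 := by norm_num
      _ ≤ |(n i : ℝ)| ^ 2 := pow_le_pow_left₀ (by norm_num) h2 2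
      _ = (n i : ℝ) ^ 2 := sq_abs _
  calc 4 * π ^ 2 ≤ (2 * π * (n i : ℝ)) ^ 2 := by nlinarith [Real.pi_pos]
    _ ≤ ∑ j : Fin 3, (2 * π * (n j : ℝ)) ^ 2 :=
      Finset.single_le_sum (f := fun j => (2 * π * (n j : ℝ)) ^ 2)
        (fun j _ => by positivity) (Finset.mem_univ i)

lemma bogE_lip (M κ : ℝ) (p : E3) (hM : 0 < M) (hκ : 0 < κ)
    (hκM : κ * M ≤ π ^ 2) (hP : 4 * π ^ 2 ≤ ‖p‖ ^ 2) (v1 v2 : ℝ)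
    (hv1 : |v1| ≤ M) (hv2 : |v2| ≤ M) :
    |bogE κ p v1 - bogE κ p v2| ≤ (4 * κ ^ 3 * M ^ 2 / (‖p‖ ^ 2) ^ 2) * |v1 - v2| := by
  set P := ‖p‖ ^ 2 with hPdef
  have hπ : (0:ℝ) < π ^ 2 := by positivity
  have hP0 : 0 < P := by nlinarith
  have hfun : bogE κ p = fun v => -P - κ * v + Real.sqrt (P ^ 2 + 2 * P * κ * v)
      + κ ^ 2 * v ^ 2 / (2 * P) := by
    funext v
    have : ‖p‖ ^ 4 = P ^ 2 := by rw [hPdef]; ring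
    simp [bogE, this, ← hPdef]
  have key : ∀ v ∈ Set.Icc (-M) M, HasDerivAt (bogE κ p)
      (-κ + P * κ / Real.sqrt (P ^ 2 + 2 * P * κ * v) + κ ^ 2 * v / P) v := by
    intro v hv
    have hvM : |v| ≤ M := abs_le.mpr ⟨hv.1, hv.2⟩
    have h1 : κ * (-M) ≤ κ * v := mul_le_mul_of_nonneg_left hv.1 hκ.le
    have h2 : P * (κ * M) ≤ P * π ^ 2 := mul_le_mul_of_nonneg_left hκM hP0.le
    have h3 : P * (4 * π ^ 2) ≤ P * P := mul_le_mul_of_nonneg_left hP hP0.le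
    have h4 : P * (κ * (-M)) ≤ P * (κ * v) := mul_le_mul_of_nonneg_left h1 hP0.le
    have hApos : 0 < P ^ 2 + 2 * P * κ * v := by nlinarith
    have ht0 : 0 < Real.sqrt (P ^ 2 + 2 * P * κ * v) := Real.sqrt_pos.mpr hApos
    have hA : HasDerivAt (fun v : ℝ => P ^ 2 + 2 * P * κ * v) (2 * P * κ) v := by
      exact (((hasDerivAt_id' v).const_mul (2 * P * κ)).const_add (P ^ 2)).congr_deriv (mul_one _)
    have hs : HasDerivAt (fun v : ℝ => Real.sqrt (P ^ 2 + 2 * P * κ * v))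
        ((2 * P * κ) / (2 * Real.sqrt (P ^ 2 + 2 * P * κ * v))) v := hA.sqrt hApos.ne'
    have h0 : HasDerivAt (fun v : ℝ => -P - κ * v) (-κ) v := by
      exact (((hasDerivAt_id' v).const_mul κ).const_sub (-P)).congr_deriv (by ring)
    have hq : HasDerivAt (fun v : ℝ => κ ^ 2 * v ^ 2 / (2 * P))
        (κ ^ 2 * (2 * v) / (2 * P)) v := by
      simpa [mul_comm, mul_assoc] using (((hasDerivAt_pow 2 v).const_mul (κ ^ 2)).div_const (2 * P))
    have := (h0.add hs).add hq
    rw [hfun]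
    refine HasDerivAt.congr_deriv this ?_
    field_simp
  have hmvt := Convex.norm_image_sub_le_of_norm_hasDerivWithin_le
    (f := bogE κ p)
    (f' := fun v => -κ + P * κ / Real.sqrt (P ^ 2 + 2 * P * κ * v) + κ ^ 2 * v / P)
    (s := Set.Icc (-M) M) (C := 4 * κ ^ 3 * M ^ 2 / P ^ 2)
    (fun v hv => (key v hv).hasDerivWithinAt)
    (fun v hv => by
      rw [Real.norm_eq_abs]
      exact derivBound M κ P v hM hκ hP hκM (abs_le.mpr ⟨hv.1, hv.2⟩))
    (convex_Icc _ _) (abs_le.mp hv2 |> fun h => Set.mem_Icc.mpr ⟨h.1, h.2⟩)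
    (abs_le.mp hv1 |> fun h => Set.mem_Icc.mpr ⟨h.1, h.2⟩)
  simpa [Real.norm_eq_abs] using hmvt

/-- for bounded Lipschitz-at-`0` `W` with `κM ≤ π²`, there is a constant
`C = C(M,L,κ) > 0` with `|e_p(W(p/N^β)) − e_p(W(0))| ≤ C·N^{−β}/|p|³` for all `p ∈ Λ*₊`. -/
theorem statement_12 (M L κ : ℝ) (hM : 0 < M) (hL : 0 < L) (hκ : 0 < κ)
    (hκM : κ * M ≤ π ^ 2) :
    ∃ C > 0, ∀ W : E3 → ℝ,
      (∀ k : E3, |W k| ≤ M) → (∀ k : E3, |W k - W 0| ≤ L * ‖k‖) →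
      ∀ (β : ℝ) (N : ℕ), 0 < β → 1 ≤ N →
        ∀ n : Fin 3 → ℤ, n ≠ 0 →
          |bogE κ (latticePt n) (W (((N : ℝ) ^ β)⁻¹ • latticePt n))
              - bogE κ (latticePt n) (W 0)|
            ≤ C * (N : ℝ) ^ (-β) / ‖latticePt n‖ ^ 3 := by
  refine ⟨4 * κ ^ 3 * M ^ 2 * L, by positivity, ?_⟩
  intro W hWb hWl β N hβ hN n hn
  set p := latticePt n with hp
  have hP : 4 * π ^ 2 ≤ ‖p‖ ^ 2 := lattice_sq_norm n hn
  have hπ : (0:ℝ) < π ^ 2 := by positivity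
  have hp0 : (0:ℝ) < ‖p‖ := by nlinarith [norm_nonneg p]
  have hNpos : (0:ℝ) < (N : ℝ) := by exact_mod_cast Nat.lt_of_lt_of_le Nat.zero_lt_one hN
  have hNβ : (0:ℝ) < (N : ℝ) ^ β := Real.rpow_pos_of_pos hNpos β
  set k : E3 := ((N : ℝ) ^ β)⁻¹ • p with hk
  have hlip := bogE_lip M κ p hM hκ hκM hP (W k) (W 0) (hWb k) (hWb 0)
  have hnormk : ‖k‖ = ((N : ℝ) ^ β)⁻¹ * ‖p‖ := by
    rw [hk, norm_smul, Real.norm_eq_abs, abs_of_pos (by positivity)]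
  have hWk : |W k - W 0| ≤ L * (((N : ℝ) ^ β)⁻¹ * ‖p‖) := by
    rw [← hnormk]; exact hWl k
  have hstep : |bogE κ p (W k) - bogE κ p (W 0)|
      ≤ (4 * κ ^ 3 * M ^ 2 / (‖p‖ ^ 2) ^ 2) * (L * (((N : ℝ) ^ β)⁻¹ * ‖p‖)) := by
    refine hlip.trans (mul_le_mul_of_nonneg_left hWk (by positivity))
  have hrw : (4 * κ ^ 3 * M ^ 2 / (‖p‖ ^ 2) ^ 2) * (L * (((N : ℝ) ^ β)⁻¹ * ‖p‖))
      = 4 * κ ^ 3 * M ^ 2 * L * (N : ℝ) ^ (-β) / ‖p‖ ^ 3 := by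
    rw [Real.rpow_neg hNpos.le]
    field_simp
  rw [hrw] at hstep
  exact hstep
end
end

section
/- There exists a universal constant C>0 with the following property. Let 0<β<1, N≥1, k≥2 an integer, M,B≥0, and let φ:ℝ³→ℝ satisfy |φ(u)| ≤ M for all u ∈ ℝ³ and ∑_{q∈2πℤ³} φ((u−q)/N^β)² ≤ B²·N^{3β} for all u ∈ ℝ³. Then the iterated sum T_k = (1/(2N))^k · ∑_{p∈Λ*₊} ∑_{q₁,…,q_{k−1}∈Λ*₊} (|φ(p/N^β)|/|p|²) · (|φ((p−q₁)/N^β)|/|q₁|²) · (∏_{i=1}^{k−2} |φ((q_i−q_{i+1})/N^β)|/|q_{i+1}|²) · |φ(q_{k−1}/N^β)| converges and satisfies T_k ≤ M·(C·(M+B))^k · N^{k(β−1)}. In particular, the k-th term of the Born series for 8π·a_N^β (the same expression with signed φ = κV̂ and the prefactor ((−1)^k/(2N)^k)) is bounded in absolute value by (C·κ·(M+B))^{k+1}·N^{k(β−1)}. -/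
open MeasureTheory Real

noncomputable section

/-- The `i`-th entry (as a point of `ℝ³`) of a `k`-tuple of points of `Λ*₊`; junk value `0`
for `i ≥ k`.  For `k ≥ 2`, the tuple encodes `(p, q₁, …, q_{k−1})`. -/
def tuplePt (k : ℕ) (v : Fin k → NZ) (i : ℕ) : E3 :=
  if h : i < k then latticePt (v ⟨i, h⟩).1 else 0

/-- The absolute value of the summand of the `k`-th Born term: with `P₀ = p`, `Pᵢ = qᵢ`
(`1 ≤ i ≤ k−1`) and `s = N^{−β}`, this is
`(|φ(sP₀)|/|P₀|²)·∏_{i=0}^{k−2}(|φ(s(Pᵢ−P_{i+1}))|/|P_{i+1}|²)·|φ(sP_{k−1})|`. -/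
def bornTermAbs (φ : E3 → ℝ) (s : ℝ) (k : ℕ) (v : Fin k → NZ) : ℝ :=
  (|φ (s • tuplePt k v 0)| / ‖tuplePt k v 0‖ ^ 2) *
    (∏ i ∈ Finset.range (k - 1),
      |φ (s • (tuplePt k v i - tuplePt k v (i + 1)))| / ‖tuplePt k v (i + 1)‖ ^ 2) *
    |φ (s • tuplePt k v (k - 1))|

/-- The signed summand of the `k`-th Born term. -/
def bornTermSigned (φ : E3 → ℝ) (s : ℝ) (k : ℕ) (v : Fin k → NZ) : ℝ :=
  (φ (s • tuplePt k v 0) / ‖tuplePt k v 0‖ ^ 2) *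
    (∏ i ∈ Finset.range (k - 1),
      φ (s • (tuplePt k v i - tuplePt k v (i + 1))) / ‖tuplePt k v (i + 1)‖ ^ 2) *
    φ (s • tuplePt k v (k - 1))

namespace St14

open Finset

def mq (q : NZ) : ℕ := Finset.univ.sup fun i => (q.1 i).natAbs

lemma one_le_mq (q : NZ) : 1 ≤ mq q := by
  obtain ⟨i, hi⟩ := Function.ne_iff.1 q.2
  have h1 : 1 ≤ (q.1 i).natAbs := Int.natAbs_pos.2 (by simpa using hi)
  exact h1.trans (Finset.le_sup (f := fun i => (q.1 i).natAbs) (mem_univ i))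

lemma natAbs_le_mq (q : NZ) (i : Fin 3) : (q.1 i).natAbs ≤ mq q :=
  Finset.le_sup (f := fun i => (q.1 i).natAbs) (mem_univ i)

lemma exists_mq (q : NZ) : ∃ i, (q.1 i).natAbs = mq q := by
  obtain ⟨i, _, h⟩ := Finset.exists_mem_eq_sup (univ : Finset (Fin 3)) univ_nonempty
    (fun i => (q.1 i).natAbs)
  exact ⟨i, h.symm⟩

lemma coord_sq_le_norm_sq (x : E3) (i : Fin 3) : x i ^ 2 ≤ ‖x‖ ^ 2 := by
  rw [EuclideanSpace.norm_eq, Real.sq_sqrt (by positivity)]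
  simp only [Real.norm_eq_abs, sq_abs]
  exact Finset.single_le_sum (f := fun j => x j ^ 2) (fun j _ => sq_nonneg _) (mem_univ i)

lemma latticePt_apply (n : Fin 3 → ℤ) (i : Fin 3) : latticePt n i = 2 * π * (n i : ℝ) := rfl

lemma mq_sq_le (q : NZ) : (2 * π) ^ 2 * (mq q : ℝ) ^ 2 ≤ ‖latticePt q.1‖ ^ 2 := by
  obtain ⟨i, hi⟩ := exists_mq q
  have h1 : (latticePt q.1 i) ^ 2 ≤ ‖latticePt q.1‖ ^ 2 := coord_sq_le_norm_sq _ i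
  have h3 : ((mq q : ℝ)) ^ 2 = ((q.1 i : ℝ)) ^ 2 := by
    rw [← hi]
    rw [Nat.cast_natAbs, Int.cast_abs, sq_abs]
  calc (2 * π) ^ 2 * (mq q : ℝ) ^ 2 = (2 * π * (q.1 i : ℝ)) ^ 2 := by rw [h3]; ring
    _ = (latticePt q.1 i) ^ 2 := by rw [latticePt_apply]
    _ ≤ _ := h1

lemma norm_sq_pos (q : NZ) : 0 < ‖latticePt q.1‖ ^ 2 := by
  have h1 := mq_sq_le q
  have h2 : (1:ℝ) ≤ (mq q : ℝ) := by exact_mod_cast one_le_mq q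
  have hπ := Real.pi_gt_three
  have h3 : (1:ℝ) ≤ (mq q : ℝ)^2 := by nlinarith
  nlinarith [h1, h2, hπ, h3]

lemma card_fiber_le (t : Finset NZ) (m : ℕ) (hm : 1 ≤ m) (ht : ∀ q ∈ t, mq q = m) :
    t.card ≤ 26 * m ^ 2 := by
  obtain ⟨l, rfl⟩ : ∃ l, m = l + 1 := ⟨m - 1, by omega⟩
  classical
  set big : Finset (Fin 3 → ℤ) := Fintype.piFinset fun _ => Finset.Icc (-(l + 1 : ℤ)) (l + 1)
    with hbig
  set small : Finset (Fin 3 → ℤ) := Fintype.piFinset fun _ => Finset.Icc (-(l : ℤ)) l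
    with hsmall
  have hsub : small ⊆ big := by
    apply Fintype.piFinset_subset
    intro a
    apply Finset.Icc_subset_Icc <;> omega
  have habs : ∀ q ∈ t, ∀ i : Fin 3, |q.1 i| ≤ (l : ℤ) + 1 := by
    intro q hq i
    have h1 : (q.1 i).natAbs ≤ l + 1 := (ht q hq) ▸ natAbs_le_mq q i
    rw [Int.abs_eq_natAbs]
    exact_mod_cast h1
  have himg : t.image Subtype.val ⊆ big \ small := by
    intro n hn
    obtain ⟨q, hq, rfl⟩ := Finset.mem_image.1 hn
    rw [Finset.mem_sdiff]
    constructor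
    · rw [hbig, Fintype.mem_piFinset]
      intro i
      rw [Finset.mem_Icc, ← abs_le]
      exact habs q hq i
    · rw [hsmall, Fintype.mem_piFinset]
      push_neg
      obtain ⟨i, hi⟩ := exists_mq q
      refine ⟨i, ?_⟩
      rw [Finset.mem_Icc, ← abs_le]
      rw [ht q hq] at hi
      intro hcon
      rw [Int.abs_eq_natAbs, hi] at hcon
      exact_mod_cast (by omega : ¬ ((l:ℤ) + 1 ≤ l)) (by exact_mod_cast hcon)
  have hcard : t.card = (t.image Subtype.val).card :=
    (Finset.card_image_of_injective t Subtype.val_injective).symm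
  have hbigcard : big.card = (2 * l + 3) ^ 3 := by
    rw [hbig, Fintype.card_piFinset]
    simp only [Int.card_Icc]
    rw [Finset.prod_const, Finset.card_univ, Fintype.card_fin]
    congr 1
    omega
  have hsmallcard : small.card = (2 * l + 1) ^ 3 := by
    rw [hsmall, Fintype.card_piFinset]
    simp only [Int.card_Icc]
    rw [Finset.prod_const, Finset.card_univ, Fintype.card_fin]
    congr 1
    omega
  have h1 : t.card ≤ (big \ small).card := hcard ▸ Finset.card_le_card himg
  rw [Finset.card_sdiff_of_subset hsub, hbigcard, hsmallcard] at h1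
  have h2 : (2 * l + 3) ^ 3 - (2 * l + 1) ^ 3 ≤ 26 * (l + 1) ^ 2 := by
    have : (2 * l + 3) ^ 3 ≤ (2 * l + 1) ^ 3 + 26 * (l + 1) ^ 2 := by nlinarith
    omega
  omega

lemma sum_g_mq_le (t : Finset NZ) (g : ℕ → ℝ) (hg : ∀ m, 0 ≤ g m) :
    ∑ q ∈ t, g (mq q) ≤ ∑ m ∈ t.image mq, (26 : ℝ) * (m : ℝ) ^ 2 * g m := by
  classical
  rw [← Finset.sum_fiberwise_of_maps_to' (fun q hq => Finset.mem_image_of_mem mq hq) g]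
  refine Finset.sum_le_sum fun m hm => ?_
  rw [Finset.sum_const, nsmul_eq_mul]
  obtain ⟨q, hq, hqm⟩ := Finset.mem_image.1 hm
  have hm1 : 1 ≤ m := hqm ▸ one_le_mq q
  have hcard := card_fiber_le (t.filter (fun q => mq q = m)) m hm1
    (fun q hq => (Finset.mem_filter.1 hq).2)
  apply mul_le_mul_of_nonneg_right _ (hg m)
  calc ((t.filter (fun q => mq q = m)).card : ℝ) ≤ ((26 * m ^ 2 : ℕ) : ℝ) := by
        exact_mod_cast hcard
    _ = 26 * (m : ℝ) ^ 2 := by push_cast; ring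

lemma sum_Ico_inv_sq (a : ℕ) (ha : 1 ≤ a) (b : ℕ) :
    ∑ m ∈ Finset.Ico a b, ((m : ℝ) ^ 2)⁻¹ ≤ 2 / a := by
  rcases le_or_gt a b with hab | hab
  · have key : ∀ b : ℕ, a ≤ b → ∑ m ∈ Finset.Ico a b, ((m : ℝ) ^ 2)⁻¹ ≤ 2 / a - 2 / b := by
      intro b hb
      induction b, hb using Nat.le_induction with
      | base => simp
      | succ n hn ih =>
        rw [Finset.sum_Ico_succ_top hn]
        have hn1 : (1 : ℝ) ≤ (n : ℝ) := by exact_mod_cast ha.trans hn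
        have h0 : (0 : ℝ) < n := by linarith
        have h1 : (0 : ℝ) < (n : ℝ) + 1 := by linarith
        have key2 : ((n : ℝ) ^ 2)⁻¹ + 2 / ((n : ℝ) + 1) ≤ 2 / n := by
          have e1 : 2 / (n : ℝ) - 2 / ((n : ℝ) + 1) = 2 / ((n : ℝ) * ((n : ℝ) + 1)) := by
            field_simp
            ring
          have e2 : ((n : ℝ) ^ 2)⁻¹ ≤ 2 / ((n : ℝ) * ((n : ℝ) + 1)) := by
            rw [inv_eq_one_div, div_le_div_iff₀ (by positivity) (by positivity)]
            nlinarith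
          linarith
        push_cast
        linarith [ih]
    have h2 : (0 : ℝ) ≤ 2 / b := by positivity
    linarith [key b hab]
  · rw [Finset.Ico_eq_empty (by omega)]
    simp
    positivity

lemma sum_inv_sq_le (t : Finset NZ) (R : ℝ) (hR : 1 ≤ R) (ht : ∀ q ∈ t, (mq q : ℝ) ≤ R) :
    ∑ q ∈ t, ((mq q : ℝ) ^ 2)⁻¹ ≤ 26 * R := by
  classical
  refine (sum_g_mq_le t (fun m => ((m : ℝ) ^ 2)⁻¹) (fun m => by positivity)).trans ?_
  have heq : ∀ m ∈ t.image mq, (26 : ℝ) * (m : ℝ) ^ 2 * ((m : ℝ) ^ 2)⁻¹ = 26 := by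
    intro m hm
    obtain ⟨q, hq, hqm⟩ := Finset.mem_image.1 hm
    have hm1 : 1 ≤ m := hqm ▸ one_le_mq q
    have hne : ((m : ℝ) ^ 2) ≠ 0 := by positivity
    field_simp
  rw [Finset.sum_congr rfl heq, Finset.sum_const, nsmul_eq_mul]
  have hsub : t.image mq ⊆ Finset.Icc 1 ⌊R⌋₊ := by
    intro m hm
    obtain ⟨q, hq, hqm⟩ := Finset.mem_image.1 hm
    rw [Finset.mem_Icc]
    exact ⟨hqm ▸ one_le_mq q, Nat.le_floor (hqm ▸ ht q hq)⟩
  have hcard : (t.image mq).card ≤ ⌊R⌋₊ := by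
    have := Finset.card_le_card hsub
    rwa [Nat.card_Icc, Nat.add_sub_cancel] at this
  have : ((t.image mq).card : ℝ) ≤ R :=
    le_trans (by exact_mod_cast hcard) (Nat.floor_le (by linarith))
  nlinarith

lemma sum_inv_qu_le (t : Finset NZ) (m₀ : ℕ) (hm₀ : 1 ≤ m₀) (ht : ∀ q ∈ t, m₀ ≤ mq q) :
    ∑ q ∈ t, ((mq q : ℝ) ^ 4)⁻¹ ≤ 52 / m₀ := by
  classical
  refine (sum_g_mq_le t (fun m => ((m : ℝ) ^ 4)⁻¹) (fun m => by positivity)).trans ?_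
  have heq : ∀ m ∈ t.image mq, (26 : ℝ) * (m : ℝ) ^ 2 * ((m : ℝ) ^ 4)⁻¹
      = 26 * ((m : ℝ) ^ 2)⁻¹ := by
    intro m hm
    obtain ⟨q, hq, hqm⟩ := Finset.mem_image.1 hm
    have hm1 : 1 ≤ m := hqm ▸ one_le_mq q
    have hne : ((m : ℝ)) ≠ 0 := by
      have : (0:ℝ) < (m:ℝ) := by exact_mod_cast hm1
      positivity
    field_simp
  rw [Finset.sum_congr rfl heq, ← Finset.mul_sum]
  have hsub : t.image mq ⊆ Finset.Ico m₀ ((t.image mq).sup id + 1) := by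
    intro m hm
    obtain ⟨q, hq, hqm⟩ := Finset.mem_image.1 hm
    rw [Finset.mem_Ico]
    refine ⟨hqm ▸ ht q hq, Nat.lt_succ_of_le (Finset.le_sup (f := id) hm)⟩
  have h1 : ∑ m ∈ t.image mq, ((m : ℝ) ^ 2)⁻¹
      ≤ ∑ m ∈ Finset.Ico m₀ ((t.image mq).sup id + 1), ((m : ℝ) ^ 2)⁻¹ :=
    Finset.sum_le_sum_of_subset_of_nonneg hsub (fun m _ _ => by positivity)
  have h2 := sum_Ico_inv_sq m₀ hm₀ ((t.image mq).sup id + 1)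
  have hm₀R : (0:ℝ) < (m₀ : ℝ) := by exact_mod_cast hm₀
  calc (26 : ℝ) * ∑ m ∈ t.image mq, ((m : ℝ) ^ 2)⁻¹ ≤ 26 * (2 / m₀) := by
        apply mul_le_mul_of_nonneg_left (h1.trans h2) (by norm_num)
    _ = 52 / m₀ := by ring

lemma finiteChain (φ : E3 → ℝ) (M Bc s R : ℝ) (hM : 0 ≤ M) (hB : 0 ≤ Bc) (hR : 1 ≤ R)
    (hφ : ∀ u, |φ u| ≤ M)
    (hsq : ∀ (u : E3) (t : Finset NZ),
      ∑ q ∈ t, φ (s • (u - latticePt q.1)) ^ 2 ≤ Bc ^ 2 * R ^ 3)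
    (u : E3) (t : Finset NZ) :
    ∑ q ∈ t, |φ (s • (u - latticePt q.1))| / ‖latticePt q.1‖ ^ 2 ≤ (M + Bc) * R := by
  classical
  have hπ := Real.pi_gt_three
  have hπ2 : (26:ℝ) ≤ (2*π)^2 := by nlinarith
  have hπ4 : (52:ℝ) ≤ (2*π)^4 := by
    have h2 : (36:ℝ) ≤ (2*π)^2 := by nlinarith
    nlinarith [h2]
  have hR0 : (0:ℝ) < R := by linarith
  set F : NZ → ℝ := fun q => |φ (s • (u - latticePt q.1))| / ‖latticePt q.1‖ ^ 2 with hF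
  rw [← Finset.sum_filter_add_sum_filter_not t (fun q => (mq q : ℝ) ≤ R) F]
  have hb1 : ∑ q ∈ t.filter (fun q => (mq q : ℝ) ≤ R), F q ≤ M * R := by
    set t1 := t.filter (fun q => (mq q : ℝ) ≤ R) with ht1
    have step1 : ∀ q ∈ t1, F q ≤ M * ((2*π)^2)⁻¹ * ((mq q : ℝ)^2)⁻¹ := by
      intro q hq
      have h1 : F q ≤ M / ((2*π)^2 * (mq q : ℝ)^2) := by
        apply div_le_div₀ (le_trans (abs_nonneg _) (hφ 0)) (hφ _) _ (mq_sq_le q)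
        have hm : (1:ℝ) ≤ (mq q : ℝ) := by exact_mod_cast one_le_mq q
        have h1 : (0:ℝ) < ((mq q : ℝ))^2 := by nlinarith
        exact mul_pos (by positivity) h1
      calc F q ≤ M / ((2*π)^2 * (mq q : ℝ)^2) := h1
        _ = M * ((2*π)^2)⁻¹ * ((mq q : ℝ)^2)⁻¹ := by
          rw [div_eq_mul_inv, mul_inv, mul_assoc]
    calc ∑ q ∈ t1, F q ≤ ∑ q ∈ t1, M * ((2*π)^2)⁻¹ * ((mq q : ℝ)^2)⁻¹ :=
          Finset.sum_le_sum step1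
      _ = M * ((2*π)^2)⁻¹ * ∑ q ∈ t1, ((mq q : ℝ)^2)⁻¹ := by rw [Finset.mul_sum]
      _ ≤ M * ((2*π)^2)⁻¹ * (26 * R) := by
          apply mul_le_mul_of_nonneg_left
            (sum_inv_sq_le t1 R hR (fun q hq => (Finset.mem_filter.1 hq).2))
          positivity
      _ ≤ M * R := by
          rw [mul_assoc]
          apply mul_le_mul_of_nonneg_left _ hM
          rw [inv_mul_le_iff₀ (by positivity)]
          exact mul_le_mul_of_nonneg_right hπ2 hR0.le
  have hb2 : ∑ q ∈ t.filter (fun q => ¬ ((mq q : ℝ) ≤ R)), F q ≤ Bc * R := by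
    set t2 := t.filter (fun q => ¬ ((mq q : ℝ) ≤ R)) with ht2
    set m₀ : ℕ := ⌊R⌋₊ + 1 with hm₀def
    have hm₀1 : 1 ≤ m₀ := by omega
    have hm₀R : R ≤ (m₀ : ℝ) := by
      have := Nat.lt_floor_add_one R
      push_cast [hm₀def]
      linarith
    have ht2m : ∀ q ∈ t2, m₀ ≤ mq q := by
      intro q hq
      have h2 := (Finset.mem_filter.1 hq).2
      push_neg at h2
      have : ⌊R⌋₊ < mq q := (Nat.floor_lt (by linarith)).2 h2
      omega
    set f : NZ → ℝ := fun q => |φ (s • (u - latticePt q.1))| with hf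
    set g : NZ → ℝ := fun q => (‖latticePt q.1‖ ^ 2)⁻¹ with hg
    have hFfg : ∀ q, F q = f q * g q := fun q => div_eq_mul_inv _ _
    have hCS := Real.sum_mul_le_sqrt_mul_sqrt t2 f g
    have hf2 : ∑ q ∈ t2, f q ^ 2 ≤ Bc ^ 2 * R ^ 3 := by
      have : ∀ q ∈ t2, f q ^ 2 = φ (s • (u - latticePt q.1)) ^ 2 := fun q _ => sq_abs _
      rw [Finset.sum_congr rfl this]
      exact hsq u t2
    have hg2 : ∑ q ∈ t2, g q ^ 2 ≤ ((2*π)^4)⁻¹ * (52 / m₀) := by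
      have step : ∀ q ∈ t2, g q ^ 2 ≤ ((2*π)^4)⁻¹ * ((mq q : ℝ)^4)⁻¹ := by
        intro q hq
        have h1 : (2*π)^2 * (mq q : ℝ)^2 ≤ ‖latticePt q.1‖^2 := mq_sq_le q
        have hm : (1:ℝ) ≤ (mq q : ℝ) := by exact_mod_cast one_le_mq q
        have hpos : (0:ℝ) < (2*π)^2 * (mq q : ℝ)^2 := by
          have h1 : (0:ℝ) < ((mq q : ℝ))^2 := by nlinarith
          exact mul_pos (by positivity) h1
        have h2 : g q ≤ ((2*π)^2 * (mq q : ℝ)^2)⁻¹ := by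
          rw [hg]
          exact inv_anti₀ hpos h1
        have hgpos : 0 ≤ g q := by rw [hg]; positivity
        calc g q ^ 2 ≤ (((2*π)^2 * (mq q : ℝ)^2)⁻¹) ^ 2 := by nlinarith
          _ = ((2*π)^4)⁻¹ * ((mq q : ℝ)^4)⁻¹ := by
            have hπ0 : π ≠ 0 := Real.pi_ne_zero
            have hmq0 : ((mq q : ℝ)) ≠ 0 := by
              have hm : (1:ℝ) ≤ (mq q : ℝ) := by exact_mod_cast one_le_mq q
              linarith
            field_simp
      calc ∑ q ∈ t2, g q ^ 2 ≤ ∑ q ∈ t2, ((2*π)^4)⁻¹ * ((mq q : ℝ)^4)⁻¹ :=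
            Finset.sum_le_sum step
        _ = ((2*π)^4)⁻¹ * ∑ q ∈ t2, ((mq q : ℝ)^4)⁻¹ := by rw [Finset.mul_sum]
        _ ≤ ((2*π)^4)⁻¹ * (52 / m₀) := by
            apply mul_le_mul_of_nonneg_left (sum_inv_qu_le t2 m₀ hm₀1 ht2m)
            positivity
    have hprod : (∑ q ∈ t2, f q ^ 2) * (∑ q ∈ t2, g q ^ 2) ≤ (Bc * R)^2 := by
      have hm₀pos : (0:ℝ) < (m₀ : ℝ) := by exact_mod_cast hm₀1
      have h52 : 52 / (m₀ : ℝ) ≤ 52 / R := by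
        apply div_le_div_of_nonneg_left (by norm_num) hR0 hm₀R
      have hfnn : 0 ≤ ∑ q ∈ t2, f q ^ 2 := Finset.sum_nonneg fun q _ => sq_nonneg _
      have hgnn : 0 ≤ ∑ q ∈ t2, g q ^ 2 := Finset.sum_nonneg fun q _ => sq_nonneg _
      have key : ((2*π)^4)⁻¹ * (52 / m₀) ≤ R⁻¹ := by
        have h1 : ((2*π)^4)⁻¹ * (52 / (m₀:ℝ)) ≤ ((2*π)^4)⁻¹ * (52 / R) :=
          mul_le_mul_of_nonneg_left h52 (by positivity)
        have h2 : ((2*π)^4)⁻¹ * (52 / R) ≤ R⁻¹ := by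
          rw [div_eq_mul_inv]
          have hone : ((2*π)^4)⁻¹ * 52 ≤ 1 := by
            rw [inv_mul_le_iff₀ (by positivity), mul_one]
            exact hπ4
          calc ((2*π)^4)⁻¹ * (52 * R⁻¹) = (((2*π)^4)⁻¹ * 52) * R⁻¹ := by ring
            _ ≤ 1 * R⁻¹ := mul_le_mul_of_nonneg_right hone (by positivity)
            _ = R⁻¹ := one_mul _
        linarith
      calc (∑ q ∈ t2, f q ^ 2) * (∑ q ∈ t2, g q ^ 2)
          ≤ (Bc ^ 2 * R ^ 3) * R⁻¹ := by
            apply mul_le_mul hf2 (hg2.trans key) hgnn (by positivity)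
        _ = (Bc * R)^2 := by
            field_simp
    have hsqrt : Real.sqrt (∑ q ∈ t2, f q ^ 2) * Real.sqrt (∑ q ∈ t2, g q ^ 2) ≤ Bc * R := by
      rw [← Real.sqrt_mul (Finset.sum_nonneg fun q _ => sq_nonneg _)]
      calc Real.sqrt ((∑ q ∈ t2, f q ^ 2) * (∑ q ∈ t2, g q ^ 2))
          ≤ Real.sqrt ((Bc * R)^2) := Real.sqrt_le_sqrt hprod
        _ = Bc * R := Real.sqrt_sq (by positivity)
    calc ∑ q ∈ t2, F q = ∑ q ∈ t2, f q * g q := Finset.sum_congr rfl fun q _ => hFfg q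
      _ ≤ _ := hCS
      _ ≤ Bc * R := hsqrt
  linarith

lemma tsum_ofReal_le {ι : Type} (f : ι → ℝ) (c : ℝ)
    (h : ∀ t : Finset ι, ∑ i ∈ t, f i ≤ c) (hf : ∀ i, 0 ≤ f i) :
    ∑' i, ENNReal.ofReal (f i) ≤ ENNReal.ofReal c := by
  rw [ENNReal.tsum_eq_iSup_sum]
  refine iSup_le fun t => ?_
  rw [← ENNReal.ofReal_sum_of_nonneg (fun i _ => hf i)]
  exact ENNReal.ofReal_le_ofReal (h t)

lemma ofReal_prod {ι : Type} (f : ι → ℝ) :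
    ∀ t : Finset ι, (∀ i ∈ t, 0 ≤ f i) →
      ENNReal.ofReal (∏ i ∈ t, f i) = ∏ i ∈ t, ENNReal.ofReal (f i) := by
  intro t
  induction t using Finset.cons_induction with
  | empty => intro _; simp
  | cons a tt hx ih =>
    intro hf
    rw [Finset.prod_cons, Finset.prod_cons,
      ENNReal.ofReal_mul (hf a (Finset.mem_cons_self a tt)),
      ih (fun i hi => hf i (Finset.mem_cons_of_mem hi))]

lemma chainTsum (b : NZ → NZ → ENNReal) (c : NZ → ENNReal) (D Mc : ENNReal)
    (hb : ∀ u, ∑' q, b u q ≤ D) (hc : ∀ q, c q ≤ Mc) :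
    ∀ (j : ℕ) (a : NZ → ENNReal), (∑' p, a p ≤ D) →
      (∑' v : Fin (j + 1) → NZ,
        a (v 0) * (∏ i : Fin j, b (v i.castSucc) (v i.succ)) * c (v (Fin.last j)))
        ≤ D ^ (j + 1) * Mc := by
  intro j
  induction j with
  | zero =>
    intro a ha
    have he : ∀ q : NZ,
        a ((fun _ : Fin 1 => q) 0) * (∏ i : Fin 0, b ((fun _ : Fin 1 => q) i.castSucc)
          ((fun _ : Fin 1 => q) i.succ)) * c ((fun _ : Fin 1 => q) (Fin.last 0))
        = a q * c q := by
      intro q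
      simp
    rw [← (Equiv.funUnique (Fin 1) NZ).symm.tsum_eq]
    simp only [Equiv.funUnique_symm_apply]
    calc ∑' q : NZ, a ((fun _ : Fin 1 => q) 0) * (∏ i : Fin 0,
            b ((fun _ : Fin 1 => q) i.castSucc) ((fun _ : Fin 1 => q) i.succ))
            * c ((fun _ : Fin 1 => q) (Fin.last 0))
        = ∑' q : NZ, a q * c q := tsum_congr he
      _ ≤ ∑' q : NZ, a q * Mc :=
          ENNReal.tsum_le_tsum fun q => mul_le_mul_right (hc q) (a q)
      _ = (∑' q : NZ, a q) * Mc := ENNReal.tsum_mul_right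
      _ ≤ D ^ (0 + 1) * Mc := by
          rw [pow_one]
          exact mul_le_mul_left ha Mc
  | succ n ih =>
    intro a ha
    have he := (Fin.consEquiv (fun _ : Fin (n + 2) => NZ)).tsum_eq
      (f := fun v : Fin (n + 2) → NZ =>
        a (v 0) * (∏ i : Fin (n + 1), b (v i.castSucc) (v i.succ)) * c (v (Fin.last (n + 1))))
    rw [← he]
    have hterm : ∀ (p : NZ) (w : Fin (n + 1) → NZ),
        a ((Fin.cons p w : Fin (n+2) → NZ) 0)
          * (∏ i : Fin (n + 1), b ((Fin.cons p w : Fin (n+2) → NZ) i.castSucc)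
              ((Fin.cons p w : Fin (n+2) → NZ) i.succ))
          * c ((Fin.cons p w : Fin (n+2) → NZ) (Fin.last (n + 1)))
        = a p * ((b p) (w 0) * (∏ i : Fin n, b (w i.castSucc) (w i.succ)) * c (w (Fin.last n))) := by
      intro p w
      have hprod : (∏ i : Fin (n + 1), b ((Fin.cons p w : Fin (n+2) → NZ) i.castSucc)
          ((Fin.cons p w : Fin (n+2) → NZ) i.succ))
          = b p (w 0) * ∏ i : Fin n, b (w i.castSucc) (w i.succ) := by
        rw [Fin.prod_univ_succ]
        simp only [Fin.castSucc_zero, Fin.cons_zero, Fin.cons_succ, ← Fin.succ_castSucc]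
      have hlast : ((Fin.cons p w : Fin (n+2) → NZ) (Fin.last (n + 1))) = w (Fin.last n) := by
        rw [← Fin.succ_last, Fin.cons_succ]
      rw [hprod, hlast, Fin.cons_zero, mul_assoc]
    calc ∑' x : NZ × (Fin (n + 1) → NZ),
          a ((Fin.cons x.1 x.2 : Fin (n+2) → NZ) 0)
            * (∏ i : Fin (n + 1), b ((Fin.cons x.1 x.2 : Fin (n+2) → NZ) i.castSucc)
                ((Fin.cons x.1 x.2 : Fin (n+2) → NZ) i.succ))
            * c ((Fin.cons x.1 x.2 : Fin (n+2) → NZ) (Fin.last (n + 1)))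
        = ∑' (p : NZ) (w : Fin (n + 1) → NZ),
            a p * ((b p) (w 0) * (∏ i : Fin n, b (w i.castSucc) (w i.succ))
              * c (w (Fin.last n))) := by
          rw [ENNReal.tsum_prod']
          exact tsum_congr fun p => tsum_congr fun w => hterm p w
      _ = ∑' p : NZ, a p * ∑' w : Fin (n + 1) → NZ,
            (b p) (w 0) * (∏ i : Fin n, b (w i.castSucc) (w i.succ)) * c (w (Fin.last n)) := by
          exact tsum_congr fun p => ENNReal.tsum_mul_left
      _ ≤ ∑' p : NZ, a p * (D ^ (n + 1) * Mc) :=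
          ENNReal.tsum_le_tsum fun p => mul_le_mul_right (ih (b p) (hb p)) (a p)
      _ = (∑' p : NZ, a p) * (D ^ (n + 1) * Mc) := ENNReal.tsum_mul_right
      _ ≤ D * (D ^ (n + 1) * Mc) := mul_le_mul_left ha _
      _ = D ^ (n + 1 + 1) * Mc := by ring

def negEquiv : NZ ≃ NZ where
  toFun q := ⟨-q.1, fun h => q.2 (by simpa [neg_eq_zero] using h)⟩
  invFun q := ⟨-q.1, fun h => q.2 (by simpa [neg_eq_zero] using h)⟩
  left_inv q := Subtype.ext (neg_neg _)
  right_inv q := Subtype.ext (neg_neg _)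

lemma latticePt_neg (n : Fin 3 → ℤ) : latticePt (-n) = -latticePt n := by
  ext i
  show 2 * π * ((-n i : ℤ) : ℝ) = -(2 * π * (n i : ℝ))
  push_cast
  ring

lemma tuplePt_eq (k : ℕ) (v : Fin k → NZ) (i : ℕ) (h : i < k) :
    tuplePt k v i = latticePt (v ⟨i, h⟩).1 := dif_pos h

lemma born_eq (φ : E3 → ℝ) (s : ℝ) (j : ℕ) (v : Fin (j + 1) → NZ) :
    bornTermAbs φ s (j + 1) v =
      (|φ (s • latticePt (v 0).1)| / ‖latticePt (v 0).1‖ ^ 2) *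
      (∏ i : Fin j,
        (|φ (s • (latticePt (v i.castSucc).1 - latticePt (v i.succ).1))|
          / ‖latticePt (v i.succ).1‖ ^ 2)) *
      |φ (s • latticePt (v (Fin.last j)).1)| := by
  unfold bornTermAbs
  have h0 : tuplePt (j + 1) v 0 = latticePt (v 0).1 := tuplePt_eq _ _ 0 (by omega)
  have hlast : tuplePt (j + 1) v ((j + 1) - 1) = latticePt (v (Fin.last j)).1 := by
    have : (j + 1) - 1 = j := by omega
    rw [this, tuplePt_eq _ _ j (by omega)]
    rfl
  rw [h0, hlast]
  congr 1
  congr 1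
  have hr : (j + 1) - 1 = j := by omega
  rw [hr]
  rw [← Fin.prod_univ_eq_prod_range (fun i =>
    |φ (s • (tuplePt (j+1) v i - tuplePt (j+1) v (i + 1)))| / ‖tuplePt (j+1) v (i + 1)‖ ^ 2) j]
  apply Finset.prod_congr rfl
  intro i _
  have h1 : tuplePt (j + 1) v (i : ℕ) = latticePt (v i.castSucc).1 := by
    rw [tuplePt_eq _ _ _ (by omega : (i:ℕ) < j + 1)]
    rfl
  have h2 : tuplePt (j + 1) v ((i : ℕ) + 1) = latticePt (v i.succ).1 := by
    rw [tuplePt_eq _ _ _ (by omega : (i:ℕ) + 1 < j + 1)]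
    rfl
  rw [h1, h2]

lemma bornTermAbs_nonneg (φ : E3 → ℝ) (s : ℝ) (k : ℕ) (v : Fin k → NZ) :
    0 ≤ bornTermAbs φ s k v := by
  unfold bornTermAbs
  apply mul_nonneg (mul_nonneg (div_nonneg (abs_nonneg _) (by positivity)) _) (abs_nonneg _)
  exact Finset.prod_nonneg fun i _ => div_nonneg (abs_nonneg _) (by positivity)

lemma abs_bornTermSigned (φ : E3 → ℝ) (s : ℝ) (k : ℕ) (v : Fin k → NZ) :
    |bornTermSigned φ s k v| = bornTermAbs φ s k v := by
  unfold bornTermSigned bornTermAbs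
  rw [abs_mul, abs_mul, abs_div, Finset.abs_prod,
    abs_of_nonneg (by positivity : (0:ℝ) ≤ ‖tuplePt k v 0‖ ^ 2)]
  congr 1
  congr 1
  apply Finset.prod_congr rfl
  intro i _
  rw [abs_div, abs_of_nonneg (by positivity : (0:ℝ) ≤ ‖tuplePt k v (i + 1)‖ ^ 2)]

lemma bornTermAbs_smul (φ : E3 → ℝ) (κ : ℝ) (s : ℝ) (j : ℕ) (v : Fin (j + 2) → NZ) :
    bornTermAbs (fun u => κ * φ u) s (j + 2) v
      = |κ| ^ (j + 3) * bornTermAbs φ s (j + 2) v := by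
  unfold bornTermAbs
  simp only [abs_mul]
  have hprod : ∏ i ∈ Finset.range ((j + 2) - 1),
      |κ| * |φ (s • (tuplePt (j+2) v i - tuplePt (j+2) v (i + 1)))|
        / ‖tuplePt (j+2) v (i + 1)‖ ^ 2
      = |κ| ^ (j + 1) * ∏ i ∈ Finset.range ((j + 2) - 1),
        |φ (s • (tuplePt (j+2) v i - tuplePt (j+2) v (i + 1)))|
          / ‖tuplePt (j+2) v (i + 1)‖ ^ 2 := by
    calc ∏ i ∈ Finset.range ((j + 2) - 1),
          |κ| * |φ (s • (tuplePt (j+2) v i - tuplePt (j+2) v (i + 1)))|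
            / ‖tuplePt (j+2) v (i + 1)‖ ^ 2
        = ∏ i ∈ Finset.range ((j + 2) - 1),
          |κ| * (|φ (s • (tuplePt (j+2) v i - tuplePt (j+2) v (i + 1)))|
            / ‖tuplePt (j+2) v (i + 1)‖ ^ 2) :=
          Finset.prod_congr rfl fun i _ => mul_div_assoc _ _ _
      _ = (∏ _i ∈ Finset.range ((j + 2) - 1), |κ|) *
          ∏ i ∈ Finset.range ((j + 2) - 1),
            |φ (s • (tuplePt (j+2) v i - tuplePt (j+2) v (i + 1)))|
              / ‖tuplePt (j+2) v (i + 1)‖ ^ 2 := Finset.prod_mul_distrib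
      _ = _ := by
          rw [Finset.prod_const, Finset.card_range]
          norm_num
  rw [hprod]
  ring

end St14

/-- there is a universal `C > 0` such that, under the stated bounds on `φ`,
the `k`-th iterated Born sum `T_k` converges with `T_k ≤ M(C(M+B))^k N^{k(β−1)}`; in
particular the signed `k`-th Born term with `φ` replaced by `κφ` and prefactor
`(−1)^k/(2N)^k` is bounded in absolute value by `(Cκ(M+B))^{k+1} N^{k(β−1)}`. -/
theorem statement_14 :
    ∃ C > 0, ∀ (β : ℝ) (N k : ℕ) (M B : ℝ) (φ : E3 → ℝ),
      0 < β → β < 1 → 1 ≤ N → 2 ≤ k → 0 ≤ M → 0 ≤ B →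
      (∀ u : E3, |φ u| ≤ M) →
      (∀ u : E3,
        Summable (fun q : Fin 3 → ℤ => φ (((N : ℝ) ^ β)⁻¹ • (u - latticePt q)) ^ 2) ∧
        (∑' q : Fin 3 → ℤ, φ (((N : ℝ) ^ β)⁻¹ • (u - latticePt q)) ^ 2)
          ≤ B ^ 2 * (N : ℝ) ^ (3 * β)) →
      (Summable (fun v : Fin k → NZ => bornTermAbs φ ((N : ℝ) ^ β)⁻¹ k v) ∧
        (1 / (2 * N) : ℝ) ^ k * (∑' v : Fin k → NZ, bornTermAbs φ ((N : ℝ) ^ β)⁻¹ k v)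
          ≤ M * (C * (M + B)) ^ k * (N : ℝ) ^ ((k : ℝ) * (β - 1))) ∧
      (∀ κ : ℝ, 0 < κ →
        Summable (fun v : Fin k → NZ =>
          bornTermSigned (fun u => κ * φ u) ((N : ℝ) ^ β)⁻¹ k v) ∧
        |(-1 : ℝ) ^ k / (2 * N : ℝ) ^ k *
            ∑' v : Fin k → NZ, bornTermSigned (fun u => κ * φ u) ((N : ℝ) ^ β)⁻¹ k v|
          ≤ (C * κ * (M + B)) ^ (k + 1) * (N : ℝ) ^ ((k : ℝ) * (β - 1))) := by
  refine ⟨1, one_pos, ?_⟩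
  intro β N k M B φ hβ0 hβ1 hN hk hM hB hφ h2
  obtain ⟨j, rfl⟩ : ∃ j, k = j + 2 := ⟨k - 2, by omega⟩
  have hN1 : (1:ℝ) ≤ (N:ℝ) := by exact_mod_cast hN
  have hN0 : (0:ℝ) < (N:ℝ) := by linarith
  set s : ℝ := ((N : ℝ) ^ β)⁻¹ with hs
  set R : ℝ := (N : ℝ) ^ β with hR
  have hR1 : 1 ≤ R := Real.one_le_rpow hN1 hβ0.le
  have hR0 : (0:ℝ) < R := by linarith
  have hR3 : (N:ℝ) ^ (3 * β) = R ^ 3 := by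
    rw [hR, mul_comm, Real.rpow_mul (Nat.cast_nonneg N), ← Real.rpow_natCast ((N:ℝ) ^ β) 3]
    norm_num
  have hsq' : ∀ (u : E3) (t : Finset NZ),
      ∑ q ∈ t, φ (s • (u - latticePt q.1)) ^ 2 ≤ B ^ 2 * R ^ 3 := by
    intro u t
    have him : ∑ q ∈ t, φ (s • (u - latticePt q.1)) ^ 2
        = ∑ n ∈ t.image Subtype.val, φ (s • (u - latticePt n)) ^ 2 := by
      rw [Finset.sum_image (by intro x _ y _ hxy; exact Subtype.ext hxy)]
    rw [him]
    refine le_trans (Summable.sum_le_tsum _ (fun n _ => sq_nonneg _) (h2 u).1) ?_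
    rw [← hR3]
    exact (h2 u).2
  set D : ENNReal := ENNReal.ofReal ((M + B) * R) with hD
  set Mc : ENNReal := ENNReal.ofReal M with hMc
  set bE : NZ → NZ → ENNReal := fun u q =>
    ENNReal.ofReal (|φ (s • (latticePt u.1 - latticePt q.1))| / ‖latticePt q.1‖ ^ 2) with hbd
  set aE : NZ → ENNReal := fun p =>
    ENNReal.ofReal (|φ (s • latticePt p.1)| / ‖latticePt p.1‖ ^ 2) with had
  set cE : NZ → ENNReal := fun q => ENNReal.ofReal (|φ (s • latticePt q.1)|) with hcd
  have hbE : ∀ u : NZ, ∑' q, bE u q ≤ D := by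
    intro u
    exact St14.tsum_ofReal_le _ _
      (fun t => St14.finiteChain φ M B s R hM hB hR1 hφ hsq' (latticePt u.1) t)
      (fun q => div_nonneg (abs_nonneg _) (by positivity))
  have hcE : ∀ q, cE q ≤ Mc := fun q => ENNReal.ofReal_le_ofReal (hφ _)
  have haE : ∑' p, aE p ≤ D := by
    rw [← St14.negEquiv.tsum_eq aE]
    have heq : ∀ q : NZ, aE (St14.negEquiv q)
        = ENNReal.ofReal (|φ (s • ((0:E3) - latticePt q.1))| / ‖latticePt q.1‖ ^ 2) := by
      intro q
      show ENNReal.ofReal (|φ (s • latticePt (-q.1))| / ‖latticePt (-q.1)‖ ^ 2) = _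
      rw [St14.latticePt_neg, norm_neg, zero_sub]
    rw [tsum_congr heq]
    exact St14.tsum_ofReal_le _ _
      (fun t => St14.finiteChain φ M B s R hM hB hR1 hφ hsq' 0 t)
      (fun q => div_nonneg (abs_nonneg _) (by positivity))
  have key := St14.chainTsum bE cE D Mc hbE hcE (j + 1) aE haE
  have hpt : ∀ v : Fin (j + 2) → NZ,
      ENNReal.ofReal (bornTermAbs φ s (j + 2) v)
        = aE (v 0) * (∏ i : Fin (j + 1), bE (v i.castSucc) (v i.succ))
            * cE (v (Fin.last (j + 1))) := by
    intro v
    rw [St14.born_eq φ s (j + 1) v]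
    rw [ENNReal.ofReal_mul (by positivity),
      ENNReal.ofReal_mul (by positivity),
      St14.ofReal_prod _ Finset.univ (fun i _ => div_nonneg (abs_nonneg _) (by positivity))]
  have hSle : ∑' v : Fin (j + 2) → NZ, ENNReal.ofReal (bornTermAbs φ s (j + 2) v)
      ≤ ENNReal.ofReal (((M + B) * R) ^ (j + 2) * M) := by
    rw [tsum_congr hpt]
    refine key.trans ?_
    rw [ENNReal.ofReal_mul (by positivity), ENNReal.ofReal_pow (by positivity)]
  have hfin : ∑' v : Fin (j + 2) → NZ, ENNReal.ofReal (bornTermAbs φ s (j + 2) v) ≠ ⊤ :=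
    ne_top_of_le_ne_top ENNReal.ofReal_ne_top hSle
  have hsummable : Summable (fun v : Fin (j + 2) → NZ => bornTermAbs φ s (j + 2) v) := by
    have h := ENNReal.summable_toReal hfin
    refine (summable_congr fun v => ?_).1 h
    exact ENNReal.toReal_ofReal (St14.bornTermAbs_nonneg φ s (j + 2) v)
  have htsum : ∑' v : Fin (j + 2) → NZ, bornTermAbs φ s (j + 2) v
      ≤ ((M + B) * R) ^ (j + 2) * M := by
    have h1 : ∑' v : Fin (j + 2) → NZ, bornTermAbs φ s (j + 2) v
        = (∑' v : Fin (j + 2) → NZ, ENNReal.ofReal (bornTermAbs φ s (j + 2) v)).toReal := by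
      rw [ENNReal.tsum_toReal_eq (fun v => ENNReal.ofReal_ne_top)]
      exact tsum_congr fun v =>
        (ENNReal.toReal_ofReal (St14.bornTermAbs_nonneg φ s (j + 2) v)).symm
    rw [h1]
    refine (ENNReal.toReal_mono ENNReal.ofReal_ne_top hSle).trans ?_
    rw [ENNReal.toReal_ofReal (by positivity)]
  have hexp : ((N:ℝ) ^ (β - 1)) ^ (j + 2) = (N:ℝ) ^ (((j + 2 : ℕ) : ℝ) * (β - 1)) := by
    rw [← Real.rpow_natCast ((N:ℝ) ^ (β - 1)) (j + 2), ← Real.rpow_mul (Nat.cast_nonneg N),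
      mul_comm]
  have hbase : R / (2 * N) ≤ (N:ℝ) ^ (β - 1) := by
    have h1 : (N:ℝ) ^ (β - 1) = R / (N:ℝ) := by
      rw [hR, Real.rpow_sub hN0, Real.rpow_one]
    rw [h1]
    exact div_le_div_of_nonneg_left hR0.le hN0 (by linarith)
  have hexp0 : (0:ℝ) ≤ (N:ℝ) ^ (((j + 2 : ℕ) : ℝ) * (β - 1)) := Real.rpow_nonneg hN0.le _
  have hT : (1 / (2 * (N:ℝ))) ^ (j + 2)
      * ∑' v : Fin (j + 2) → NZ, bornTermAbs φ s (j + 2) v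
      ≤ M * (M + B) ^ (j + 2) * (N:ℝ) ^ (((j + 2 : ℕ) : ℝ) * (β - 1)) := by
    have hstep : (1 / (2 * (N:ℝ))) ^ (j + 2)
        * ∑' v : Fin (j + 2) → NZ, bornTermAbs φ s (j + 2) v
        ≤ (1 / (2 * (N:ℝ))) ^ (j + 2) * (((M + B) * R) ^ (j + 2) * M) :=
      mul_le_mul_of_nonneg_left htsum (by positivity)
    refine hstep.trans ?_
    have hre : (1 / (2 * (N:ℝ))) ^ (j + 2) * (((M + B) * R) ^ (j + 2) * M)
        = M * (M + B) ^ (j + 2) * (R / (2 * N)) ^ (j + 2) := by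
      rw [mul_pow, div_pow, div_pow, one_pow]
      ring
    rw [hre]
    apply mul_le_mul_of_nonneg_left _ (by positivity)
    rw [← hexp]
    exact pow_le_pow_left₀ (by positivity) hbase _
  constructor
  · refine ⟨hsummable, ?_⟩
    rw [one_mul]
    push_cast at hT ⊢
    exact hT
  · intro κ hκ
    have habs : ∀ v : Fin (j + 2) → NZ,
        |bornTermSigned (fun u => κ * φ u) s (j + 2) v|
          = κ ^ (j + 3) * bornTermAbs φ s (j + 2) v := by
      intro v
      rw [St14.abs_bornTermSigned, St14.bornTermAbs_smul, abs_of_pos hκ]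
    have hsum2 : Summable (fun v : Fin (j + 2) → NZ =>
        |bornTermSigned (fun u => κ * φ u) s (j + 2) v|) := by
      refine (summable_congr fun v => habs v).2 ?_
      exact hsummable.mul_left _
    have hsummable2 : Summable (fun v : Fin (j + 2) → NZ =>
        bornTermSigned (fun u => κ * φ u) s (j + 2) v) := hsum2.of_abs
    refine ⟨hsummable2, ?_⟩
    have h3 : |∑' v : Fin (j + 2) → NZ, bornTermSigned (fun u => κ * φ u) s (j + 2) v|
        ≤ κ ^ (j + 3) * ∑' v : Fin (j + 2) → NZ, bornTermAbs φ s (j + 2) v := by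
      have h4 := norm_tsum_le_tsum_norm (f := fun v : Fin (j + 2) → NZ =>
        bornTermSigned (fun u => κ * φ u) s (j + 2) v) (by simpa [Real.norm_eq_abs] using hsum2)
      simp only [Real.norm_eq_abs] at h4
      refine h4.trans ?_
      rw [tsum_congr habs, tsum_mul_left]
    rw [abs_mul, abs_div, abs_pow, abs_pow, abs_neg, abs_one, one_pow]
    have h2N : |2 * (N:ℝ)| = 2 * (N:ℝ) := abs_of_pos (by linarith)
    rw [h2N]
    have hpre : (1:ℝ) / (2 * (N:ℝ)) ^ (j + 2) = (1 / (2 * (N:ℝ))) ^ (j + 2) := by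
      rw [div_pow, one_pow]
    rw [hpre]
    calc (1 / (2 * (N:ℝ))) ^ (j + 2)
          * |∑' v : Fin (j + 2) → NZ, bornTermSigned (fun u => κ * φ u) s (j + 2) v|
        ≤ (1 / (2 * (N:ℝ))) ^ (j + 2)
          * (κ ^ (j + 3) * ∑' v : Fin (j + 2) → NZ, bornTermAbs φ s (j + 2) v) :=
          mul_le_mul_of_nonneg_left h3 (by positivity)
      _ = κ ^ (j + 3) * ((1 / (2 * (N:ℝ))) ^ (j + 2)
          * ∑' v : Fin (j + 2) → NZ, bornTermAbs φ s (j + 2) v) := by ring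
      _ ≤ κ ^ (j + 3) * (M * (M + B) ^ (j + 2) * (N:ℝ) ^ (((j + 2 : ℕ) : ℝ) * (β - 1))) :=
          mul_le_mul_of_nonneg_left hT (by positivity)
      _ ≤ (1 * κ * (M + B)) ^ (j + 2 + 1) * (N:ℝ) ^ (((j + 2 : ℕ) : ℝ) * (β - 1)) := by
          rw [one_mul, mul_pow]
          have hMB : M * (M + B) ^ (j + 2) ≤ (M + B) ^ (j + 3) := by
            have : (M + B) ^ (j + 3) = (M + B) * (M + B) ^ (j + 2) := by ring
            rw [this]
            exact mul_le_mul_of_nonneg_right (by linarith) (by positivity)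
          calc κ ^ (j + 3) * (M * (M + B) ^ (j + 2) * (N:ℝ) ^ (((j + 2 : ℕ) : ℝ) * (β - 1)))
              ≤ κ ^ (j + 3) * ((M + B) ^ (j + 3) * (N:ℝ) ^ (((j + 2 : ℕ) : ℝ) * (β - 1))) := by
                apply mul_le_mul_of_nonneg_left _ (by positivity)
                exact mul_le_mul_of_nonneg_right hMB hexp0
            _ = κ ^ (j + 2 + 1) * (M + B) ^ (j + 2 + 1) * (N:ℝ) ^ (((j + 2 : ℕ) : ℝ) * (β - 1)) := by
                ring
end
end
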